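/- arXiv:0907.4241 — 5 statements merged into one kernel-verified Lean document; each statement's English description precedes it below -/
import Mathlib

section
/- Let m_1, m_2 be relatively prime integers greater than one, and let a, b, c be nonnegative integers with a ≥ 2, b + c ≥ 2, and gcd(a, b m_1 + c m_2) = 1. Then S = ⟨a m_1, a m_2, b m_1 + c m_2⟩ is a symmetric numerical semigroup of embedding dimension three. -/

lemma mem_closure_triple {p q r x : ℕ} :
    x ∈ AddSubmonoid.closure ({p, q, r} : Set ℕ) ↔ ∃ α β γ : ℕ, x = α * p + β * q + γ * r := by
  constructor
  · intro hx
    induction hx using AddSubmonoid.closure_induction with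
    | mem y hy =>
      simp only [Set.mem_insert_iff, Set.mem_singleton_iff] at hy
      rcases hy with h | h | h
      · exact ⟨1, 0, 0, by simp [h]⟩
      · exact ⟨0, 1, 0, by simp [h]⟩
      · exact ⟨0, 0, 1, by simp [h]⟩
    | zero => exact ⟨0, 0, 0, by simp⟩
    | add x y _ _ hx hy =>
      obtain ⟨a1, b1, c1, rfl⟩ := hx
      obtain ⟨a2, b2, c2, rfl⟩ := hy
      exact ⟨a1 + a2, b1 + b2, c1 + c2, by ring⟩
  · rintro ⟨α, β, γ, rfl⟩
    have hp : p ∈ AddSubmonoid.closure ({p, q, r} : Set ℕ) := AddSubmonoid.subset_closure (by simp)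
    have hq : q ∈ AddSubmonoid.closure ({p, q, r} : Set ℕ) := AddSubmonoid.subset_closure (by simp)
    have hr : r ∈ AddSubmonoid.closure ({p, q, r} : Set ℕ) := AddSubmonoid.subset_closure (by simp)
    simpa [smul_eq_mul] using add_mem (add_mem (nsmul_mem hp α) (nsmul_mem hq β)) (nsmul_mem hr γ)

lemma mem_closure_pair {p q x : ℕ} :
    x ∈ AddSubmonoid.closure ({p, q} : Set ℕ) ↔ ∃ α β : ℕ, x = α * p + β * q := by
  constructor
  · intro hx
    induction hx using AddSubmonoid.closure_induction with
    | mem y hy =>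
      simp only [Set.mem_insert_iff, Set.mem_singleton_iff] at hy
      rcases hy with h | h
      · exact ⟨1, 0, by simp [h]⟩
      · exact ⟨0, 1, by simp [h]⟩
    | zero => exact ⟨0, 0, by simp⟩
    | add x y _ _ hx hy =>
      obtain ⟨a1, b1, rfl⟩ := hx
      obtain ⟨a2, b2, rfl⟩ := hy
      exact ⟨a1 + a2, b1 + b2, by ring⟩
  · rintro ⟨α, β, rfl⟩
    have hp : p ∈ AddSubmonoid.closure ({p, q} : Set ℕ) := AddSubmonoid.subset_closure (by simp)
    have hq : q ∈ AddSubmonoid.closure ({p, q} : Set ℕ) := AddSubmonoid.subset_closure (by simp)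
    simpa [smul_eq_mul] using add_mem (nsmul_mem hp α) (nsmul_mem hq β)

/-- existence of residue: for coprime g n, any t = u*g + v*n with 0 ≤ u < n -/
lemma exists_res (g n : ℕ) (hn : 0 < n) (hcop : Nat.Coprime g n) (t : ℤ) :
    ∃ u v : ℤ, 0 ≤ u ∧ u < n ∧ t = u * g + v * n := by
  have hcopZ : IsCoprime (g : ℤ) (n : ℤ) := by
    rw [Int.isCoprime_iff_gcd_eq_one]; exact_mod_cast hcop
  obtain ⟨x, y, hxy⟩ := hcopZ
  have hnz : (n : ℤ) ≠ 0 := by exact_mod_cast hn.ne'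
  have hnpos : (0 : ℤ) < n := by exact_mod_cast hn
  refine ⟨(t * x) % n, t * y + (t * x / n) * g, Int.emod_nonneg _ hnz, Int.emod_lt_of_pos _ hnpos, ?_⟩
  have hmod : (t * x) % n = t * x - n * (t * x / n) := by
    rw [Int.emod_def]
  rw [hmod]
  linear_combination (-t) * hxy

lemma TZ_iff (m₁ m₂ : ℕ) (hm₂ : 0 < m₂) (hcop : Nat.Coprime m₁ m₂) (t u v : ℤ)
    (hu0 : 0 ≤ u) (hum : u < m₂) (ht : t = u * m₁ + v * m₂) :
    (∃ p q : ℕ, t = p * m₁ + q * m₂) ↔ 0 ≤ v := by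
  constructor
  · rintro ⟨p, q, hpq⟩
    have h1 : ((p : ℤ) - u) * m₁ = (v - q) * m₂ := by linear_combination ht - hpq
    have hcopZ : IsCoprime (m₂ : ℤ) (m₁ : ℤ) := by
      rw [Int.isCoprime_iff_gcd_eq_one]; exact_mod_cast hcop.symm
    have h2 : (m₂ : ℤ) ∣ (p : ℤ) - u := by
      refine hcopZ.dvd_of_dvd_mul_right ⟨v - q, by linarith [h1]⟩
    obtain ⟨k, hk⟩ := h2
    have hm2Z : (0 : ℤ) < m₂ := by exact_mod_cast hm₂
    have hp0 : (0 : ℤ) ≤ p := Int.natCast_nonneg p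
    have hk0 : 0 ≤ k := by nlinarith
    have h3 : v - q = k * m₁ := by
      have := h1
      rw [hk] at this
      have hcancel : (m₂ : ℤ) * (k * m₁) = m₂ * (v - q) := by ring_nf; ring_nf at this; linarith
      have := mul_left_cancel₀ (by exact_mod_cast hm₂.ne' : (m₂:ℤ) ≠ 0) hcancel
      linarith
    have hq0 : (0 : ℤ) ≤ q := Int.natCast_nonneg q
    have hm1 : (0 : ℤ) ≤ m₁ := Int.natCast_nonneg m₁
    nlinarith
  · intro hv
    refine ⟨u.toNat, v.toNat, ?_⟩
    rw [ht]
    push_cast [Int.toNat_of_nonneg hu0, Int.toNat_of_nonneg hv]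
    ring

lemma TZ_sym (m₁ m₂ : ℕ) (hm₁ : 1 < m₁) (hm₂ : 1 < m₂) (hcop : Nat.Coprime m₁ m₂) (t : ℤ) :
    Xor' (∃ p q : ℕ, t = p * m₁ + q * m₂)
      (∃ p q : ℕ, ((m₁ : ℤ) * m₂ - m₁ - m₂) - t = p * m₁ + q * m₂) := by
  obtain ⟨u, v, hu0, hum, ht⟩ := exists_res m₁ m₂ (by omega) hcop t
  have h1 := TZ_iff m₁ m₂ (by omega) hcop t u v hu0 hum ht
  have h2 := TZ_iff m₁ m₂ (by omega) hcop (((m₁ : ℤ) * m₂ - m₁ - m₂) - t) ((m₂ : ℤ) - 1 - u)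
      (-1 - v) (by linarith) (by linarith [hu0]) (by push_cast; ring_nf; ring_nf at ht; linarith)
  rcases le_or_gt 0 v with hv | hv
  · exact Or.inl ⟨h1.mpr hv, fun h => by have := h2.mp h; linarith⟩
  · exact Or.inr ⟨h2.mpr (by linarith), fun h => by have := h1.mp h; linarith⟩

lemma SZ_iff (m₁ m₂ a b c : ℕ) (ha : 0 < a) (hcop : Nat.Coprime a (b * m₁ + c * m₂))
    (x γ t : ℤ) (h0 : 0 ≤ γ) (h1 : γ < a)
    (hx : x = γ * (b * m₁ + c * m₂) + a * t) :
    (∃ p q r : ℕ, x = p * (a * m₁) + q * (a * m₂) + r * (b * m₁ + c * m₂)) ↔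
      (∃ u v : ℕ, t = u * m₁ + v * m₂) := by
  constructor
  · rintro ⟨p, q, r, hpqr⟩
    have hd : ((r : ℤ) - γ) * (b * m₁ + c * m₂) = a * (t - p * m₁ - q * m₂) := by
      linear_combination hx - hpqr
    have hcopZ : IsCoprime (a : ℤ) ((b : ℤ) * m₁ + c * m₂) := by
      have hc : ((b * m₁ + c * m₂ : ℕ) : ℤ) = (b : ℤ) * m₁ + c * m₂ := by push_cast; ring
      rw [← hc, Int.isCoprime_iff_gcd_eq_one, Int.gcd_natCast_natCast]
      exact hcop
    have h2 : (a : ℤ) ∣ (r : ℤ) - γ := by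
      exact hcopZ.dvd_of_dvd_mul_right ⟨t - p * m₁ - q * m₂, hd⟩
    obtain ⟨k, hk⟩ := h2
    have haZ : (0 : ℤ) < a := by exact_mod_cast ha
    have hr0 : (0 : ℤ) ≤ r := Int.natCast_nonneg r
    have hk0 : 0 ≤ k := by nlinarith
    have h3 : t - p * m₁ - q * m₂ = k * (b * m₁ + c * m₂) := by
      rw [hk] at hd
      have hcancel : (a : ℤ) * (k * (b * m₁ + c * m₂)) = a * (t - p * m₁ - q * m₂) := by
        linarith [hd]
      have := mul_left_cancel₀ haZ.ne' hcancel
      linarith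
    refine ⟨p + k.toNat * b, q + k.toNat * c, ?_⟩
    push_cast [Int.toNat_of_nonneg hk0]
    linarith [h3]
  · rintro ⟨u, v, htuv⟩
    refine ⟨u, v, γ.toNat, ?_⟩
    push_cast [Int.toNat_of_nonneg h0]
    rw [hx, htuv]; ring

lemma SZ_sym (m₁ m₂ a b c : ℕ) (hm₁ : 1 < m₁) (hm₂ : 1 < m₂) (hcopm : Nat.Coprime m₁ m₂)
    (ha : 2 ≤ a) (hcop : Nat.Coprime a (b * m₁ + c * m₂)) (x : ℤ) :
    Xor' (∃ p q r : ℕ, x = p * (a * m₁) + q * (a * m₂) + r * (b * m₁ + c * m₂))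
      (∃ p q r : ℕ, ((a : ℤ) * ((m₁ : ℤ) * m₂ - m₁ - m₂) + ((a : ℤ) - 1) * (b * m₁ + c * m₂)) - x
        = p * (a * m₁) + q * (a * m₂) + r * (b * m₁ + c * m₂)) := by
  obtain ⟨u, v, hu0, hua, hx⟩ := exists_res (b * m₁ + c * m₂) a (by omega) hcop.symm x
  have hx' : x = u * ((b : ℤ) * m₁ + c * m₂) + a * v := by push_cast at hx; linarith
  have h1 := SZ_iff m₁ m₂ a b c (by omega) hcop x u v hu0 hua hx'
  set F : ℤ := (a : ℤ) * ((m₁ : ℤ) * m₂ - m₁ - m₂) + ((a : ℤ) - 1) * (b * m₁ + c * m₂) with hF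
  have h2 := SZ_iff m₁ m₂ a b c (by omega) hcop (F - x) ((a : ℤ) - 1 - u)
      (((m₁ : ℤ) * m₂ - m₁ - m₂) - v) (by linarith) (by linarith)
      (by rw [hF, hx']; ring)
  have h3 := TZ_sym m₁ m₂ hm₁ hm₂ hcopm v
  rcases h3 with ⟨hT, hnT⟩ | ⟨hT, hnT⟩
  · exact Or.inl ⟨h1.mpr hT, fun h => hnT (by
      have := h2.mp h
      obtain ⟨p, q, hpq⟩ := this
      exact ⟨p, q, by linarith⟩)⟩
  · refine Or.inr ⟨h2.mpr ?_, fun h => hnT (h1.mp h)⟩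
    obtain ⟨p, q, hpq⟩ := hT
    exact ⟨p, q, by linarith⟩

lemma cop_one {a d : ℕ} (h : Nat.Coprime a d) (hd : a ∣ d) : a = 1 :=
  Nat.dvd_one.mp (h ▸ Nat.dvd_gcd dvd_rfl hd)

lemma gen_not_mem (m₁ m₂ a b c : ℕ) (hm₁ : 1 < m₁) (hm₂ : 1 < m₂)
    (hcopm : Nat.Coprime m₁ m₂) (ha : 2 ≤ a) (hbc : 2 ≤ b + c)
    (hcop : Nat.Coprime a (b * m₁ + c * m₂)) :
    a * m₁ ∉ AddSubmonoid.closure ({a * m₂, b * m₁ + c * m₂} : Set ℕ) := by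
  intro hmem
  rw [mem_closure_pair] at hmem
  obtain ⟨β, γ, h⟩ := hmem
  have ha0 : 0 < a := by omega
  have hd1 : a ∣ γ * (b * m₁ + c * m₂) := by
    have h2 : a ∣ β * (a * m₂) := ⟨β * m₂, by ring⟩
    have h1 : a ∣ β * (a * m₂) + γ * (b * m₁ + c * m₂) := by
      rw [← h]; exact dvd_mul_right a m₁
    exact (Nat.dvd_add_right h2).mp h1
  have hγ : a ∣ γ := Nat.Coprime.dvd_of_dvd_mul_right hcop hd1
  obtain ⟨k, rfl⟩ := hγ
  have hmul : a * m₁ = a * (β * m₂ + k * b * m₁ + k * c * m₂) := by rw [h]; ring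
  have heq : m₁ = β * m₂ + k * b * m₁ + k * c * m₂ := Nat.eq_of_mul_eq_mul_left ha0 hmul
  rcases Nat.eq_zero_or_pos k with rfl | hk
  · have hdvd : m₂ ∣ m₁ := ⟨β, by rw [heq]; ring⟩
    have := cop_one hcopm.symm hdvd
    omega
  · rcases Nat.eq_zero_or_pos b with rfl | hb
    · have hdvd : m₂ ∣ m₁ := ⟨β + k * c, by rw [heq]; ring⟩
      have := cop_one hcopm.symm hdvd
      omega
    · have h1 : m₁ ≤ k * b * m₁ := Nat.le_mul_of_pos_left m₁ (by positivity)
      have hgen : ∀ X Y Z : ℕ, m₁ = X + Y + Z → m₁ ≤ Y → X = 0 ∧ Z = 0 ∧ Y = m₁ := by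
        intro X Y Z hxyz hy; omega
      obtain ⟨h2, h3, h4⟩ := hgen (β * m₂) (k * b * m₁) (k * c * m₂) heq h1
      have h5 : k * b * m₁ = 1 * m₁ := by rw [one_mul]; exact h4
      have h6 : k * b = 1 := Nat.eq_of_mul_eq_mul_right (by omega) h5
      have hb1 : b = 1 := Nat.dvd_one.mp ⟨k, by rw [← h6]; ring⟩
      have hc0 : c = 0 := by
        rcases Nat.mul_eq_zero.mp h3 with h' | h'
        · rcases Nat.mul_eq_zero.mp h' with h'' | h'' <;> omega
        · omega
      omega

lemma stmt11_diff_first {A B C : ℕ} (h1 : A ≠ B) (h2 : A ≠ C) :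
    ({A, B, C} : Set ℕ) \ {A} = {B, C} := by
  ext y
  simp only [Set.mem_diff, Set.mem_insert_iff, Set.mem_singleton_iff]
  constructor
  · rintro ⟨(rfl | h), hA⟩
    · exact absurd rfl hA
    · exact h
  · intro h
    refine ⟨Or.inr h, ?_⟩
    rintro rfl
    rcases h with rfl | rfl
    exacts [h1 rfl, h2 rfl]

lemma stmt11_diff_second {A B C : ℕ} (h1 : B ≠ A) (h2 : B ≠ C) :
    ({A, B, C} : Set ℕ) \ {B} = {A, C} := by
  ext y
  simp only [Set.mem_diff, Set.mem_insert_iff, Set.mem_singleton_iff]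
  constructor
  · rintro ⟨(rfl | rfl | rfl), hB⟩
    · exact Or.inl rfl
    · exact absurd rfl hB
    · exact Or.inr rfl
  · intro h
    refine ⟨by tauto, ?_⟩
    rintro rfl
    rcases h with rfl | rfl
    exacts [h1 rfl, h2 rfl]

lemma stmt11_diff_third {A B C : ℕ} (h1 : C ≠ A) (h2 : C ≠ B) :
    ({A, B, C} : Set ℕ) \ {C} = {A, B} := by
  ext y
  simp only [Set.mem_diff, Set.mem_insert_iff, Set.mem_singleton_iff]
  constructor
  · rintro ⟨(rfl | rfl | rfl), hC⟩
    · exact Or.inl rfl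
    · exact Or.inr rfl
    · exact absurd rfl hC
  · intro h
    refine ⟨by tauto, ?_⟩
    rintro rfl
    rcases h with rfl | rfl
    exacts [h1 rfl, h2 rfl]

/-- For coprime `m₁, m₂ > 1` and `a ≥ 2`, `b + c ≥ 2`, `gcd(a, b m₁ + c m₂) = 1`, the monoid
`S = ⟨a m₁, a m₂, b m₁ + c m₂⟩` is a symmetric numerical semigroup of embedding dimension 3. -/
theorem stmt11 (m₁ m₂ a b c : ℕ) (hm₁ : 1 < m₁) (hm₂ : 1 < m₂)
    (hcopm : Nat.Coprime m₁ m₂) (ha : 2 ≤ a) (hbc : 2 ≤ b + c)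
    (hcop : Nat.Coprime a (b * m₁ + c * m₂)) :
    -- S is a numerical semigroup: cofinite in ℕ
    {x : ℕ | x ∉ AddSubmonoid.closure ({a * m₁, a * m₂, b * m₁ + c * m₂} : Set ℕ)}.Finite ∧
    -- S is symmetric: for f the Frobenius number, x ∉ S implies f - x ∈ S
    (∃ f : ℕ, f ∉ AddSubmonoid.closure ({a * m₁, a * m₂, b * m₁ + c * m₂} : Set ℕ) ∧
      (∀ x : ℕ, x ∉ AddSubmonoid.closure ({a * m₁, a * m₂, b * m₁ + c * m₂} : Set ℕ) → x ≤ f) ∧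
      (∀ x : ℤ, (∀ s ∈ AddSubmonoid.closure ({a * m₁, a * m₂, b * m₁ + c * m₂} : Set ℕ),
          (s : ℤ) ≠ x) →
        ∃ s ∈ AddSubmonoid.closure ({a * m₁, a * m₂, b * m₁ + c * m₂} : Set ℕ),
          (s : ℤ) = (f : ℤ) - x)) ∧
    -- S has embedding dimension three: its minimal generating set has three elements
    ({a * m₁, a * m₂, b * m₁ + c * m₂} : Set ℕ).ncard = 3 ∧
    (∀ x ∈ ({a * m₁, a * m₂, b * m₁ + c * m₂} : Set ℕ),
      x ∉ AddSubmonoid.closure (({a * m₁, a * m₂, b * m₁ + c * m₂} : Set ℕ) \ {x})) := by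
  have hm12 : m₁ ≠ m₂ := by
    intro h
    rw [h, Nat.Coprime, Nat.gcd_self] at hcopm
    omega
  have hne12 : a * m₁ ≠ a * m₂ := fun h => hm12 (Nat.eq_of_mul_eq_mul_left (by omega) h)
  have hne13 : a * m₁ ≠ b * m₁ + c * m₂ := by
    intro h
    have : a ∣ b * m₁ + c * m₂ := ⟨m₁, h.symm⟩
    have := cop_one hcop this
    omega
  have hne23 : a * m₂ ≠ b * m₁ + c * m₂ := by
    intro h
    have : a ∣ b * m₁ + c * m₂ := ⟨m₂, h.symm⟩
    have := cop_one hcop this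
    omega
  -- the Frobenius number
  have hmm : m₁ + m₂ ≤ m₁ * m₂ := by nlinarith
  set f : ℕ := a * (m₁ * m₂ - m₁ - m₂) + (a - 1) * (b * m₁ + c * m₂) with hfdef
  have hfZ : (f : ℤ) = (a : ℤ) * ((m₁ : ℤ) * m₂ - m₁ - m₂)
      + ((a : ℤ) - 1) * ((b : ℤ) * m₁ + c * m₂) := by
    rw [hfdef, Nat.cast_add, Nat.cast_mul, Nat.cast_mul,
      Nat.cast_sub (show m₂ ≤ m₁ * m₂ - m₁ by omega),
      Nat.cast_sub (show m₁ ≤ m₁ * m₂ by nlinarith), Nat.cast_mul,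
      Nat.cast_sub (show 1 ≤ a by omega)]
    push_cast
    ring
  have hmemS : ∀ x : ℕ,
      (x ∈ AddSubmonoid.closure ({a * m₁, a * m₂, b * m₁ + c * m₂} : Set ℕ) ↔
      ∃ p q r : ℕ, (x : ℤ) = p * ((a : ℤ) * m₁) + q * ((a : ℤ) * m₂)
        + r * ((b : ℤ) * m₁ + c * m₂)) := by
    intro x
    rw [mem_closure_triple]
    constructor
    · rintro ⟨p, q, r, rfl⟩
      exact ⟨p, q, r, by push_cast; ring⟩
    · rintro ⟨p, q, r, hx⟩
      exact ⟨p, q, r, by exact_mod_cast hx⟩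
  have hXor := fun x : ℤ => SZ_sym m₁ m₂ a b c hm₁ hm₂ hcopm ha hcop x
  -- f is not in S
  have hfnot : f ∉ AddSubmonoid.closure ({a * m₁, a * m₂, b * m₁ + c * m₂} : Set ℕ) := by
    intro hf
    rcases hXor 0 with ⟨_, hn⟩ | ⟨_, hn0⟩
    · obtain ⟨p, q, r, hx⟩ := (hmemS f).mp hf
      exact hn ⟨p, q, r, by rw [sub_zero, ← hfZ]; exact hx⟩
    · exact hn0 ⟨0, 0, 0, by norm_num⟩
  -- maximality
  have hmax : ∀ x : ℕ, x ∉ AddSubmonoid.closure ({a * m₁, a * m₂, b * m₁ + c * m₂} : Set ℕ)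
      → x ≤ f := by
    intro x hx
    have hnS : ¬ ∃ p q r : ℕ, (x : ℤ) = p * ((a : ℤ) * m₁) + q * ((a : ℤ) * m₂)
        + r * ((b : ℤ) * m₁ + c * m₂) := fun h => hx ((hmemS x).mpr h)
    rcases hXor (x : ℤ) with ⟨hS, _⟩ | ⟨hS, _⟩
    · exact absurd hS hnS
    · obtain ⟨p, q, r, hpq⟩ := hS
      have h0 : (0 : ℤ) ≤ (p : ℤ) * ((a : ℤ) * m₁) + q * ((a : ℤ) * m₂)
          + r * ((b : ℤ) * m₁ + c * m₂) := by positivity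
      have : (x : ℤ) ≤ (f : ℤ) := by rw [hfZ]; linarith
      exact_mod_cast this
  refine ⟨?_, ⟨f, hfnot, hmax, ?_⟩, ?_, ?_⟩
  · exact (Set.finite_Iic f).subset fun x hx => hmax x hx
  · -- symmetry
    intro x hne
    have hnS : ¬ ∃ p q r : ℕ, x = p * ((a : ℤ) * m₁) + q * ((a : ℤ) * m₂)
        + r * ((b : ℤ) * m₁ + c * m₂) := by
      rintro ⟨p, q, r, hx⟩
      refine hne (p * (a * m₁) + q * (a * m₂) + r * (b * m₁ + c * m₂))
        (mem_closure_triple.mpr ⟨p, q, r, rfl⟩) ?_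
      push_cast
      linarith
    rcases hXor x with ⟨hS, _⟩ | ⟨hS, _⟩
    · exact absurd hS hnS
    · obtain ⟨p, q, r, hpq⟩ := hS
      refine ⟨p * (a * m₁) + q * (a * m₂) + r * (b * m₁ + c * m₂),
        mem_closure_triple.mpr ⟨p, q, r, rfl⟩, ?_⟩
      rw [hfZ]
      push_cast
      linarith
  · -- ncard
    rw [Set.ncard_insert_of_notMem (by simp [hne12, hne13]),
      Set.ncard_insert_of_notMem (by simp [hne23]), Set.ncard_singleton]
  · -- minimality
    intro x hx
    simp only [Set.mem_insert_iff, Set.mem_singleton_iff] at hx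
    rcases hx with rfl | rfl | rfl
    · rw [stmt11_diff_first hne12 hne13]
      exact gen_not_mem m₁ m₂ a b c hm₁ hm₂ hcopm ha hbc hcop
    · rw [stmt11_diff_second (Ne.symm hne12) hne23]
      have hcop' : Nat.Coprime a (c * m₂ + b * m₁) := by rwa [Nat.add_comm] at hcop
      have := gen_not_mem m₂ m₁ a c b hm₂ hm₁ hcopm.symm ha (by omega) hcop'
      rwa [show c * m₂ + b * m₁ = b * m₁ + c * m₂ by ring] at this
    · rw [stmt11_diff_third (Ne.symm hne13) (Ne.symm hne23)]
      intro hmem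
      rw [mem_closure_pair] at hmem
      obtain ⟨α, β, hd⟩ := hmem
      have : a ∣ b * m₁ + c * m₂ := ⟨α * m₁ + β * m₂, by rw [hd]; ring⟩
      have := cop_one hcop this
      omega
end

section
/- Let m_1, m_2 be relatively prime integers greater than one, and a, b, c nonnegative integers with a ≥ 2, b + c ≥ 2, gcd(a, b m_1 + c m_2) = 1, and S = ⟨a m_1, a m_2, b m_1 + c m_2⟩. Then S is uniquely presented if and only if 0 < b < m_2 and 0 < c < m_1. -/
open Finset

variable {M : Type*} [AddCommMonoid M] {r : ℕ}

/-- The factorization homomorphism associated to the generating tuple `A`. -/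
def phi (A : Fin r → M) (u : Fin r → ℕ) : M := ∑ i, u i • A i

/-- One step of the relation `R`: two factorizations of `a` with nonzero dot product. -/
def step (A : Fin r → M) (a : M) (u v : Fin r → ℕ) : Prop :=
  phi A u = a ∧ phi A v = a ∧ (∑ i, u i * v i) ≠ 0

/-- The relation `R` on the fiber of `a`: connected by a chain of factorizations with
consecutive nonzero dot products. -/
def Rrel (A : Fin r → M) (a : M) : (Fin r → ℕ) → (Fin r → ℕ) → Prop :=
  Relation.ReflTransGen (step A a)

/-- `a` is a Betti element: its fiber has more than one `R`-class. -/
def IsBetti (A : Fin r → M) (a : M) : Prop :=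
  ∃ u v : Fin r → ℕ, phi A u = a ∧ phi A v = a ∧ ¬ Rrel A a u v

/-- `a` is Betti-minimal: a Betti element minimal with respect to `b ≺ a ↔ a - b ∈ S`. -/
def BettiMinimal (A : Fin r → M) (a : M) : Prop :=
  IsBetti A a ∧ ∀ b : M, IsBetti A b → (∃ c : M, a = b + c) → b = a

/-- `a` has a unique presentation: exactly two factorizations, with disjoint support. -/
def HasUniquePres (A : Fin r → M) (a : M) : Prop :=
  ∃ u v : Fin r → ℕ, u ≠ v ∧ {w : Fin r → ℕ | phi A w = a} = {u, v} ∧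
    (∑ i, u i * v i) = 0

/-- The monoid generated by `A` is uniquely presented: every Betti element has exactly two
factorizations, with disjoint support. -/
def UniquelyPresented (A : Fin r → M) : Prop :=
  ∀ a : M, IsBetti A a → HasUniquePres A a
open Finset in
lemma phi3 (g u : Fin 3 → ℕ) : phi g u = u 0 * g 0 + u 1 * g 1 + u 2 * g 2 := by
  simp [phi, Fin.sum_univ_three, smul_eq_mul]

open Finset in
lemma dot3 (u v : Fin 3 → ℕ) : (∑ i, u i * v i) = u 0 * v 0 + u 1 * v 1 + u 2 * v 2 := by
  simp [Fin.sum_univ_three]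

lemma step_symm {g : Fin 3 → ℕ} {n : ℕ} {u v : Fin 3 → ℕ} (h : step g n u v) : step g n v u := by
  obtain ⟨h1, h2, h3⟩ := h
  refine ⟨h2, h1, ?_⟩
  rw [dot3] at h3 ⊢
  rw [mul_comm (v 0), mul_comm (v 1), mul_comm (v 2)]; exact h3

lemma rrel_symm {g : Fin 3 → ℕ} {n : ℕ} {u v : Fin 3 → ℕ} (h : Rrel g n u v) : Rrel g n v u := by
  induction h with
  | refl => exact Relation.ReflTransGen.refl
  | tail _ hstep ih => exact Relation.ReflTransGen.head (step_symm hstep) ih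

/-- core lemma: solutions of X p + Y q = p q -/
lemma keyL {p q X Y : ℕ} (hp : 0 < p) (hq : 0 < q) (hcop : Nat.Coprime p q)
    (h : X * p + Y * q = p * q) : (X = q ∧ Y = 0) ∨ (X = 0 ∧ Y = p) := by
  have h1 : q ∣ Y * q + X * p := by rw [add_comm, h]; exact ⟨p, by ring⟩
  have h2 : q ∣ Y * q := ⟨Y, mul_comm _ _⟩
  have hdvd : q ∣ X * p := (Nat.dvd_add_right h2).mp h1
  have hqX : q ∣ X := Nat.Coprime.dvd_of_dvd_mul_right hcop.symm hdvd
  have hXle : X ≤ q := by nlinarith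
  rcases Nat.eq_zero_or_pos X with h0 | hpos
  · right
    refine ⟨h0, ?_⟩
    subst h0
    have hy : Y * q = p * q := by simpa using h
    exact Nat.eq_of_mul_eq_mul_right hq hy
  · left
    have hXq : X = q := le_antisymm hXle (Nat.le_of_dvd hpos hqX)
    refine ⟨hXq, ?_⟩
    rw [hXq] at h
    have hy : Y * q = 0 := by nlinarith [mul_comm q p]
    rcases Nat.mul_eq_zero.mp hy with h' | h' <;> omega

/-- unique factorization of b m₁ + c m₂ over (m₁, m₂) when b < m₂, c < m₁ -/
lemma keyL2 {m₁ m₂ b c x y : ℕ} (hm₁ : 0 < m₁) (hm₂ : 0 < m₂) (hcopm : Nat.Coprime m₁ m₂)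
    (hb : b < m₂) (hc : c < m₁) (h : x * m₁ + y * m₂ = b * m₁ + c * m₂) :
    x = b ∧ y = c := by
  have hmod : y * m₂ ≡ c * m₂ [MOD m₁] := by
    show y * m₂ % m₁ = c * m₂ % m₁
    calc y * m₂ % m₁ = (y * m₂ + x * m₁) % m₁ := (Nat.add_mul_mod_self_right _ _ _).symm
      _ = (c * m₂ + b * m₁) % m₁ := by rw [show y * m₂ + x * m₁ = c * m₂ + b * m₁ by linarith]
      _ = c * m₂ % m₁ := Nat.add_mul_mod_self_right _ _ _
  have hyc : y ≡ c [MOD m₁] := Nat.ModEq.cancel_right_of_coprime (by simpa using hcopm) hmod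
  rcases lt_or_ge y c with hlt | hge
  · exfalso
    have hdvd : m₁ ∣ c - y := (Nat.modEq_iff_dvd' (le_of_lt hlt)).mp hyc
    have := Nat.le_of_dvd (by omega) hdvd
    omega
  · have hdvd : m₁ ∣ y - c := (Nat.modEq_iff_dvd' hge).mp hyc.symm
    obtain ⟨t, ht⟩ := hdvd
    have hy : y = c + t * m₁ := by rw [mul_comm] at ht; omega
    subst hy
    have hx : x * m₁ + t * m₁ * m₂ = b * m₁ := by nlinarith
    have hx2 : (x + t * m₂) * m₁ = b * m₁ := by ring_nf; ring_nf at hx; linarith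
    have hx3 : x + t * m₂ = b := Nat.eq_of_mul_eq_mul_right hm₁ hx2
    have ht0 : t = 0 := by nlinarith
    constructor <;> [skip; skip] <;> subst ht0 <;> omega

section Main

variable {m₁ m₂ a b c : ℕ}

lemma phiA (u : Fin 3 → ℕ) :
    phi ![a * m₁, a * m₂, b * m₁ + c * m₂] u
      = u 0 * (a * m₁) + u 1 * (a * m₂) + u 2 * (b * m₁ + c * m₂) := by
  rw [phi3]; simp

lemma a_dvd_u2 (hcop : Nat.Coprime a (b * m₁ + c * m₂)) {u : Fin 3 → ℕ} {X : ℕ}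
    (h : phi ![a * m₁, a * m₂, b * m₁ + c * m₂] u = a * X) : a ∣ u 2 := by
  rw [phiA] at h
  have h2 : a ∣ u 0 * (a * m₁) + u 1 * (a * m₂) := ⟨u 0 * m₁ + u 1 * m₂, by ring⟩
  have h3 : a ∣ u 0 * (a * m₁) + u 1 * (a * m₂) + u 2 * (b * m₁ + c * m₂) := h ▸ ⟨X, rfl⟩
  exact hcop.dvd_of_dvd_mul_right ((Nat.dvd_add_right h2).mp h3)

lemma mk3 {u : Fin 3 → ℕ} {x y z : ℕ} (h0 : u 0 = x) (h1 : u 1 = y) (h2 : u 2 = z) :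
    u = ![x, y, z] := by
  funext i
  fin_cases i <;> simpa

lemma beta2_mem (hm₁ : 1 < m₁) (hm₂ : 1 < m₂) (ha : 2 ≤ a) (hbc : 2 ≤ b + c)
    (hcop : Nat.Coprime a (b * m₁ + c * m₂)) {w : Fin 3 → ℕ}
    (h : phi ![a * m₁, a * m₂, b * m₁ + c * m₂] w = a * (b * m₁ + c * m₂)) :
    w 2 = 0 ∨ w = ![(0:ℕ), 0, a] := by
  have hd : 0 < b * m₁ + c * m₂ := by nlinarith
  have hdvd : a ∣ w 2 := a_dvd_u2 hcop h
  rw [phiA] at h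
  have hub : w 2 * (b * m₁ + c * m₂) ≤ a * (b * m₁ + c * m₂) := by
    linarith [Nat.zero_le (w 0 * (a * m₁)), Nat.zero_le (w 1 * (a * m₂))]
  have hle : w 2 ≤ a := Nat.le_of_mul_le_mul_right hub hd
  obtain ⟨k, hk⟩ := hdvd
  rcases Nat.eq_zero_or_pos (w 2) with h0 | hpos
  · exact Or.inl h0
  · right
    have h5 : k ≠ 0 := by rintro rfl; simp at hk; omega
    have h4 : a * k ≤ a * 1 := by rw [mul_one]; linarith
    have hk1 : k = 1 := by
      have := Nat.le_of_mul_le_mul_left h4 (by omega : 0 < a)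
      omega
    have hw2 : w 2 = a := by rw [hk, hk1, mul_one]
    rw [hw2] at h
    have h01 : w 0 * (a * m₁) + w 1 * (a * m₂) = 0 := by nlinarith
    have ham₁ : a * m₁ ≠ 0 := Nat.mul_ne_zero (by omega) (by omega)
    have ham₂ : a * m₂ ≠ 0 := Nat.mul_ne_zero (by omega) (by omega)
    obtain ⟨e1, e2⟩ := Nat.add_eq_zero.mp h01
    have hw0 : w 0 = 0 := by
      rcases Nat.mul_eq_zero.mp e1 with h' | h'
      exacts [h', absurd h' ham₁]
    have hw1 : w 1 = 0 := by
      rcases Nat.mul_eq_zero.mp e2 with h' | h'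
      exacts [h', absurd h' ham₂]
    exact mk3 hw0 hw1 hw2

lemma beta1_mem (hm₁ : 1 < m₁) (hm₂ : 1 < m₂) (ha : 2 ≤ a)
    (hcop : Nat.Coprime a (b * m₁ + c * m₂)) {w : Fin 3 → ℕ}
    (h : phi ![a * m₁, a * m₂, b * m₁ + c * m₂] w = a * (m₁ * m₂)) :
    ∃ k, w 2 = a * k ∧ (w 0 + k * b) * m₁ + (w 1 + k * c) * m₂ = m₁ * m₂ := by
  have hdvd : a ∣ w 2 := a_dvd_u2 hcop h
  obtain ⟨k, hk⟩ := hdvd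
  refine ⟨k, hk, ?_⟩
  rw [phiA, hk] at h
  have key : a * ((w 0 + k * b) * m₁ + (w 1 + k * c) * m₂) = a * (m₁ * m₂) := by
    rw [← h]; ring
  exact Nat.eq_of_mul_eq_mul_left (by omega) key

end Main

section Fibers

variable {m₁ m₂ a b c : ℕ}

lemma beta1_fiber (hm₁ : 1 < m₁) (hm₂ : 1 < m₂) (hcopm : Nat.Coprime m₁ m₂)
    (ha : 2 ≤ a) (hcop : Nat.Coprime a (b * m₁ + c * m₂)) (hb : 0 < b) (hc : 0 < c) :
    {w : Fin 3 → ℕ | phi ![a * m₁, a * m₂, b * m₁ + c * m₂] w = a * (m₁ * m₂)}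
      = {![m₂, 0, 0], ![0, m₁, 0]} := by
  ext w
  simp only [Set.mem_setOf_eq, Set.mem_insert_iff, Set.mem_singleton_iff]
  constructor
  · intro h
    obtain ⟨k, hk, hkey⟩ := beta1_mem hm₁ hm₂ ha hcop h
    rcases keyL (by omega) (by omega) hcopm hkey with ⟨h1, h2⟩ | ⟨h1, h2⟩
    · left
      have hk0 : k = 0 := by
        rcases Nat.eq_zero_or_pos k with h' | h'
        · exact h'
        · exfalso; have := Nat.mul_pos h' hc; omega
      subst hk0
      simp only [Nat.mul_zero, Nat.zero_mul, Nat.add_zero, mul_zero, zero_mul, add_zero] at hk h1 h2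
      exact mk3 h1 h2 hk
    · right
      have hk0 : k = 0 := by
        rcases Nat.eq_zero_or_pos k with h' | h'
        · exact h'
        · exfalso; have := Nat.mul_pos h' hb; omega
      subst hk0
      simp only [Nat.mul_zero, Nat.zero_mul, Nat.add_zero, mul_zero, zero_mul, add_zero] at hk h1 h2
      exact mk3 h1 h2 hk
  · rintro (rfl | rfl) <;> rw [phiA] <;> simp <;> ring

lemma beta2_fiber (hm₁ : 1 < m₁) (hm₂ : 1 < m₂) (hcopm : Nat.Coprime m₁ m₂)
    (ha : 2 ≤ a) (hbc : 2 ≤ b + c) (hcop : Nat.Coprime a (b * m₁ + c * m₂))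
    (hb : b < m₂) (hc : c < m₁) :
    {w : Fin 3 → ℕ | phi ![a * m₁, a * m₂, b * m₁ + c * m₂] w = a * (b * m₁ + c * m₂)}
      = {![b, c, 0], ![0, 0, a]} := by
  ext w
  simp only [Set.mem_setOf_eq, Set.mem_insert_iff, Set.mem_singleton_iff]
  constructor
  · intro h
    rcases beta2_mem hm₁ hm₂ ha hbc hcop h with h0 | he
    · left
      rw [phiA, h0] at h
      have key : a * (w 0 * m₁ + w 1 * m₂) = a * (b * m₁ + c * m₂) := by
        rw [← h]; ring
      have key2 := Nat.eq_of_mul_eq_mul_left (by omega : 0 < a) key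
      obtain ⟨e1, e2⟩ := keyL2 (by omega) (by omega) hcopm hb hc key2
      exact mk3 e1 e2 h0
    · right; exact he
  · rintro (rfl | rfl) <;> rw [phiA] <;> simp <;> ring

end Fibers

section Conn

variable {m₁ m₂ a b c : ℕ}

lemma red_z (hm₁ : 1 < m₁) (hm₂ : 1 < m₂) (ha : 2 ≤ a)
    {n : ℕ} (hn2 : n ≠ a * (b * m₁ + c * m₂)) :
    ∀ z, ∀ u : Fin 3 → ℕ, u 2 = z → phi ![a * m₁, a * m₂, b * m₁ + c * m₂] u = n →
      ∃ u', phi ![a * m₁, a * m₂, b * m₁ + c * m₂] u' = n ∧ u' 2 < a ∧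
        Rrel ![a * m₁, a * m₂, b * m₁ + c * m₂] n u u' := by
  intro z
  induction z using Nat.strong_induction_on with
  | _ z ih =>
    intro u hz hu
    by_cases hlt : u 2 < a
    · exact ⟨u, hu, hlt, Relation.ReflTransGen.refl⟩
    · have hge : a ≤ u 2 := not_lt.mp hlt
      obtain ⟨t, ht⟩ : ∃ t, u 2 = t + a := ⟨u 2 - a, by omega⟩
      set u' : Fin 3 → ℕ := ![u 0 + b, u 1 + c, t] with hu'
      have hval : u' 0 = u 0 + b ∧ u' 1 = u 1 + c ∧ u' 2 = t := by
        refine ⟨rfl, rfl, rfl⟩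
      have hphi' : phi ![a * m₁, a * m₂, b * m₁ + c * m₂] u' = n := by
        rw [phiA] at hu ⊢
        rw [hval.1, hval.2.1, hval.2.2, ← hu, ht]
        ring
      have hstep : step ![a * m₁, a * m₂, b * m₁ + c * m₂] n u u' := by
        refine ⟨hu, hphi', ?_⟩
        rw [dot3, hval.1, hval.2.1, hval.2.2]
        rcases Nat.eq_zero_or_pos t with ht0 | htpos
        · -- u 2 = a exactly
          rcases Nat.eq_zero_or_pos (u 0) with h00 | h0pos
          · rcases Nat.eq_zero_or_pos (u 1) with h10 | h1pos
            · exfalso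
              apply hn2
              rw [phiA, h00, h10, ht, ht0] at hu
              simpa [mul_comm] using hu.symm
            · have := Nat.mul_pos h1pos (show 0 < u 1 + c by omega)
              omega
          · have := Nat.mul_pos h0pos (show 0 < u 0 + b by omega)
            omega
        · have := Nat.mul_pos (show 0 < u 2 by omega) htpos
          omega
      obtain ⟨u'', h1, h2, h3⟩ := ih t (by omega) u' hval.2.2 hphi'
      exact ⟨u'', h1, h2, Relation.ReflTransGen.head hstep h3⟩

lemma red_y (hm₁ : 1 < m₁) (hm₂ : 1 < m₂) (ha : 2 ≤ a)
    {n : ℕ} (hn1 : n ≠ a * (m₁ * m₂)) :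
    ∀ y, ∀ u : Fin 3 → ℕ, u 1 = y → phi ![a * m₁, a * m₂, b * m₁ + c * m₂] u = n →
      u 2 < a →
      ∃ u', phi ![a * m₁, a * m₂, b * m₁ + c * m₂] u' = n ∧ u' 2 < a ∧ u' 1 < m₁ ∧
        Rrel ![a * m₁, a * m₂, b * m₁ + c * m₂] n u u' := by
  intro y
  induction y using Nat.strong_induction_on with
  | _ y ih =>
    intro u hy hu hu2
    by_cases hlt : u 1 < m₁
    · exact ⟨u, hu, hu2, hlt, Relation.ReflTransGen.refl⟩
    · have hge : m₁ ≤ u 1 := not_lt.mp hlt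
      obtain ⟨t, ht⟩ : ∃ t, u 1 = t + m₁ := ⟨u 1 - m₁, by omega⟩
      set u' : Fin 3 → ℕ := ![u 0 + m₂, t, u 2] with hu'
      have hval : u' 0 = u 0 + m₂ ∧ u' 1 = t ∧ u' 2 = u 2 := ⟨rfl, rfl, rfl⟩
      have hphi' : phi ![a * m₁, a * m₂, b * m₁ + c * m₂] u' = n := by
        rw [phiA] at hu ⊢
        rw [hval.1, hval.2.1, hval.2.2, ← hu, ht]
        ring
      have hstep : step ![a * m₁, a * m₂, b * m₁ + c * m₂] n u u' := by
        refine ⟨hu, hphi', ?_⟩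
        rw [dot3, hval.1, hval.2.1, hval.2.2]
        rcases Nat.eq_zero_or_pos (u 2) with h20 | h2pos
        · rcases Nat.eq_zero_or_pos t with ht0 | htpos
          · rcases Nat.eq_zero_or_pos (u 0) with h00 | h0pos
            · exfalso
              apply hn1
              rw [phiA, h00, h20, ht, ht0] at hu
              rw [← hu]; ring
            · have := Nat.mul_pos h0pos (show 0 < u 0 + m₂ by omega)
              omega
          · have := Nat.mul_pos (show 0 < u 1 by omega) htpos
            omega
        · have := Nat.mul_pos h2pos h2pos
          omega
      obtain ⟨u'', h1, h2, h3, h4⟩ := ih t (by omega) u' hval.2.1 hphi' (by rw [hval.2.2]; exact hu2)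
      exact ⟨u'', h1, h2, h3, Relation.ReflTransGen.head hstep h4⟩

lemma normal_unique (hm₁ : 1 < m₁) (hm₂ : 1 < m₂) (hcopm : Nat.Coprime m₁ m₂) (ha : 2 ≤ a)
    (hcop : Nat.Coprime a (b * m₁ + c * m₂)) {n : ℕ} {u v : Fin 3 → ℕ}
    (hu : phi ![a * m₁, a * m₂, b * m₁ + c * m₂] u = n)
    (hv : phi ![a * m₁, a * m₂, b * m₁ + c * m₂] v = n)
    (hu2 : u 2 < a) (hv2 : v 2 < a) (hu1 : u 1 < m₁) (hv1 : v 1 < m₁) : u = v := by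
  rw [phiA] at hu hv
  have eu : (u 2 * (b * m₁ + c * m₂)) % a = n % a := by
    conv_rhs => rw [← hu]
    rw [show u 0 * (a * m₁) + u 1 * (a * m₂) + u 2 * (b * m₁ + c * m₂)
        = u 2 * (b * m₁ + c * m₂) + (u 0 * m₁ + u 1 * m₂) * a from by ring,
      Nat.add_mul_mod_self_right]
  have ev : (v 2 * (b * m₁ + c * m₂)) % a = n % a := by
    conv_rhs => rw [← hv]
    rw [show v 0 * (a * m₁) + v 1 * (a * m₂) + v 2 * (b * m₁ + c * m₂)
        = v 2 * (b * m₁ + c * m₂) + (v 0 * m₁ + v 1 * m₂) * a from by ring,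
      Nat.add_mul_mod_self_right]
  have hmeq0 : u 2 * (b * m₁ + c * m₂) ≡ v 2 * (b * m₁ + c * m₂) [MOD a] := by
    show u 2 * (b * m₁ + c * m₂) % a = v 2 * (b * m₁ + c * m₂) % a
    rw [eu, ev]
  have hmeq : u 2 ≡ v 2 [MOD a] :=
    Nat.ModEq.cancel_right_of_coprime (by simpa using hcop) hmeq0
  have h2 : u 2 = v 2 := by
    have h' : u 2 % a = v 2 % a := hmeq
    rwa [Nat.mod_eq_of_lt hu2, Nat.mod_eq_of_lt hv2] at h' 
  have hred : u 0 * m₁ + u 1 * m₂ = v 0 * m₁ + v 1 * m₂ := by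
    have e1 : a * (u 0 * m₁ + u 1 * m₂) = a * (v 0 * m₁ + v 1 * m₂) := by
      have hmid : u 0 * (a * m₁) + u 1 * (a * m₂) = v 0 * (a * m₁) + v 1 * (a * m₂) := by
        rw [h2] at hu; linarith
      calc a * (u 0 * m₁ + u 1 * m₂) = u 0 * (a * m₁) + u 1 * (a * m₂) := by ring
        _ = v 0 * (a * m₁) + v 1 * (a * m₂) := hmid
        _ = a * (v 0 * m₁ + v 1 * m₂) := by ring
    exact Nat.eq_of_mul_eq_mul_left (by omega) e1
  have h1 : u 1 = v 1 := by
    have eu' : (u 1 * m₂) % m₁ = (v 1 * m₂) % m₁ := by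
      calc (u 1 * m₂) % m₁ = (u 1 * m₂ + u 0 * m₁) % m₁ := (Nat.add_mul_mod_self_right _ _ _).symm
        _ = (v 1 * m₂ + v 0 * m₁) % m₁ := by rw [show u 1 * m₂ + u 0 * m₁ = v 1 * m₂ + v 0 * m₁ from by linarith]
        _ = (v 1 * m₂) % m₁ := Nat.add_mul_mod_self_right _ _ _
    have hmeq : u 1 ≡ v 1 [MOD m₁] := Nat.ModEq.cancel_right_of_coprime (by simpa using hcopm) eu'
    have h' : u 1 % m₁ = v 1 % m₁ := hmeq
    rwa [Nat.mod_eq_of_lt hu1, Nat.mod_eq_of_lt hv1] at h' 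
  have h0 : u 0 = v 0 := by
    have e1 : u 0 * m₁ = v 0 * m₁ := by rw [h1] at hred; linarith
    exact Nat.eq_of_mul_eq_mul_right (by omega) e1
  funext i
  fin_cases i <;> assumption

lemma connected (hm₁ : 1 < m₁) (hm₂ : 1 < m₂) (hcopm : Nat.Coprime m₁ m₂) (ha : 2 ≤ a)
    (hcop : Nat.Coprime a (b * m₁ + c * m₂)) {n : ℕ}
    (hn1 : n ≠ a * (m₁ * m₂)) (hn2 : n ≠ a * (b * m₁ + c * m₂))
    {u v : Fin 3 → ℕ}
    (hu : phi ![a * m₁, a * m₂, b * m₁ + c * m₂] u = n)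
    (hv : phi ![a * m₁, a * m₂, b * m₁ + c * m₂] v = n) :
    Rrel ![a * m₁, a * m₂, b * m₁ + c * m₂] n u v := by
  obtain ⟨u', hu'1, hu'2, hu'3⟩ := red_z hm₁ hm₂ ha hn2 (u 2) u rfl hu
  obtain ⟨u'', h1, h2, h3, h4⟩ := red_y hm₁ hm₂ ha hn1 (u' 1) u' rfl hu'1 hu'2
  obtain ⟨v', hv'1, hv'2, hv'3⟩ := red_z hm₁ hm₂ ha hn2 (v 2) v rfl hv
  obtain ⟨v'', g1, g2, g3, g4⟩ := red_y hm₁ hm₂ ha hn1 (v' 1) v' rfl hv'1 hv'2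
  have heq : u'' = v'' := normal_unique hm₁ hm₂ hcopm ha hcop h1 g1 h2 g2 h3 g3
  have ruu : Rrel ![a * m₁, a * m₂, b * m₁ + c * m₂] n u u'' := hu'3.trans h4
  have rvv : Rrel ![a * m₁, a * m₂, b * m₁ + c * m₂] n v v'' := hv'3.trans g4
  rw [heq] at ruu
  exact ruu.trans (rrel_symm rvv)

end Conn

section Fwd

variable {m₁ m₂ a b c : ℕ}

lemma rrel_isolated {g : Fin 3 → ℕ} {n : ℕ} {u₀ : Fin 3 → ℕ}
    (hiso : ∀ w, step g n u₀ w → w = u₀) :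
    ∀ v, Rrel g n u₀ v → v = u₀ := by
  intro v h
  induction h with
  | refl => rfl
  | tail _ hstep ih => exact hiso _ (by rwa [ih] at hstep)

lemma no_unique_of_three {g : Fin 3 → ℕ} {n : ℕ} {w1 w2 w3 : Fin 3 → ℕ}
    (h1 : phi g w1 = n) (h2 : phi g w2 = n) (h3 : phi g w3 = n)
    (d12 : w1 ≠ w2) (d13 : w1 ≠ w3) (d23 : w2 ≠ w3) : ¬ HasUniquePres g n := by
  rintro ⟨p, q, hpq, hset, hdot⟩
  have m1 : w1 ∈ ({p, q} : Set (Fin 3 → ℕ)) := by rw [← hset]; exact h1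
  have m2 : w2 ∈ ({p, q} : Set (Fin 3 → ℕ)) := by rw [← hset]; exact h2
  have m3 : w3 ∈ ({p, q} : Set (Fin 3 → ℕ)) := by rw [← hset]; exact h3
  simp only [Set.mem_insert_iff, Set.mem_singleton_iff] at m1 m2 m3
  rcases m1 with rfl | rfl <;> rcases m2 with h' | h' <;> rcases m3 with h'' | h'' <;>
    simp_all

lemma ne_of_coord {u v : Fin 3 → ℕ} (i : Fin 3) (h : u i ≠ v i) : u ≠ v :=
  fun he => h (congrFun he i)

/-- Case `b ≥ m₂`. -/
lemma case_bge (hm₁ : 1 < m₁) (hm₂ : 1 < m₂) (ha : 2 ≤ a) (hbc : 2 ≤ b + c)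
    (hcop : Nat.Coprime a (b * m₁ + c * m₂)) (hbm : m₂ ≤ b) :
    ¬ UniquelyPresented ![a * m₁, a * m₂, b * m₁ + c * m₂] := by
  intro hup
  have h1 : phi ![a * m₁, a * m₂, b * m₁ + c * m₂] ![b, c, 0]
      = a * (b * m₁ + c * m₂) := by rw [phiA]; simp; try ring
  obtain ⟨t, rfl⟩ : ∃ t, b = m₂ + t := ⟨b - m₂, by omega⟩
  have h2 : phi ![a * m₁, a * m₂, (m₂ + t) * m₁ + c * m₂] ![t, c + m₁, 0]
      = a * ((m₂ + t) * m₁ + c * m₂) := by rw [phiA]; simp; try ring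
  have h3 : phi ![a * m₁, a * m₂, (m₂ + t) * m₁ + c * m₂] ![0, 0, a]
      = a * ((m₂ + t) * m₁ + c * m₂) := by rw [phiA]; simp; try ring
  have hiso : ∀ w, step ![a * m₁, a * m₂, (m₂ + t) * m₁ + c * m₂]
      (a * ((m₂ + t) * m₁ + c * m₂)) ![0, 0, a] w → w = ![0, 0, a] := by
    rintro w ⟨_, hw, hd⟩
    rw [dot3] at hd
    simp only [Matrix.cons_val_zero, Matrix.cons_val_one, Matrix.head_cons,
      Matrix.cons_val_two, Matrix.tail_cons, zero_mul, zero_add] at hd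
    rcases beta2_mem hm₁ hm₂ ha hbc hcop hw with h0 | he
    · exfalso; rw [h0] at hd; simp at hd
    · exact he
  have hbetti : IsBetti ![a * m₁, a * m₂, (m₂ + t) * m₁ + c * m₂]
      (a * ((m₂ + t) * m₁ + c * m₂)) := by
    refine ⟨![0, 0, a], ![m₂ + t, c, 0], h3, h1, ?_⟩
    intro hr
    have := rrel_isolated hiso _ hr
    have h2' := congrFun this 2
    simp at h2'
    omega
  have := hup _ hbetti
  refine no_unique_of_three h1 h2 h3 ?_ ?_ ?_ this
  · exact ne_of_coord 1 (by simp; omega)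
  · exact ne_of_coord 2 (by simp; omega)
  · exact ne_of_coord 2 (by simp; omega)

end Fwd

section Fwd2

variable {m₁ m₂ a b c : ℕ}

/-- Case `c ≥ m₁`. -/
lemma case_cge (hm₁ : 1 < m₁) (hm₂ : 1 < m₂) (ha : 2 ≤ a) (hbc : 2 ≤ b + c)
    (hcop : Nat.Coprime a (b * m₁ + c * m₂)) (hcm : m₁ ≤ c) :
    ¬ UniquelyPresented ![a * m₁, a * m₂, b * m₁ + c * m₂] := by
  intro hup
  have h1 : phi ![a * m₁, a * m₂, b * m₁ + c * m₂] ![b, c, 0]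
      = a * (b * m₁ + c * m₂) := by rw [phiA]; simp; try ring
  obtain ⟨s, rfl⟩ : ∃ s, c = m₁ + s := ⟨c - m₁, by omega⟩
  have h2 : phi ![a * m₁, a * m₂, b * m₁ + (m₁ + s) * m₂] ![b + m₂, s, 0]
      = a * (b * m₁ + (m₁ + s) * m₂) := by rw [phiA]; simp; try ring
  have h3 : phi ![a * m₁, a * m₂, b * m₁ + (m₁ + s) * m₂] ![0, 0, a]
      = a * (b * m₁ + (m₁ + s) * m₂) := by rw [phiA]; simp; try ring
  have hiso : ∀ w, step ![a * m₁, a * m₂, b * m₁ + (m₁ + s) * m₂]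
      (a * (b * m₁ + (m₁ + s) * m₂)) ![0, 0, a] w → w = ![0, 0, a] := by
    rintro w ⟨_, hw, hd⟩
    rw [dot3] at hd
    simp only [Matrix.cons_val_zero, Matrix.cons_val_one, Matrix.head_cons,
      Matrix.cons_val_two, Matrix.tail_cons, zero_mul, zero_add] at hd
    rcases beta2_mem hm₁ hm₂ ha hbc hcop hw with h0 | he
    · exfalso; rw [h0] at hd; simp at hd
    · exact he
  have hbetti : IsBetti ![a * m₁, a * m₂, b * m₁ + (m₁ + s) * m₂]
      (a * (b * m₁ + (m₁ + s) * m₂)) := by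
    refine ⟨![0, 0, a], ![b, m₁ + s, 0], h3, h1, ?_⟩
    intro hr
    have := rrel_isolated hiso _ hr
    have h2' := congrFun this 2
    simp at h2'
    omega
  refine no_unique_of_three h1 h2 h3 ?_ ?_ ?_ (hup _ hbetti)
  · exact ne_of_coord 1 (by simp; omega)
  · exact ne_of_coord 2 (by simp; omega)
  · exact ne_of_coord 2 (by simp; omega)

/-- Case `b = 0` (and `c < m₁`). -/
lemma case_b0 (hm₁ : 1 < m₁) (hm₂ : 1 < m₂) (hcopm : Nat.Coprime m₁ m₂) (ha : 2 ≤ a) (hbc : 2 ≤ b + c)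
    (hcop : Nat.Coprime a (b * m₁ + c * m₂)) (hb0 : b = 0) (hcm : c < m₁) :
    ¬ UniquelyPresented ![a * m₁, a * m₂, b * m₁ + c * m₂] := by
  subst hb0
  intro hup
  have hc2 : 2 ≤ c := by omega
  obtain ⟨s, rfl⟩ : ∃ s, m₁ = c + s := ⟨m₁ - c, by omega⟩
  have hs : 0 < s := by omega
  have h1 : phi ![a * (c + s), a * m₂, 0 * (c + s) + c * m₂] ![m₂, 0, 0]
      = a * ((c + s) * m₂) := by rw [phiA]; simp; try ring
  have h2 : phi ![a * (c + s), a * m₂, 0 * (c + s) + c * m₂] ![0, c + s, 0]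
      = a * ((c + s) * m₂) := by rw [phiA]; simp; try ring
  have h3 : phi ![a * (c + s), a * m₂, 0 * (c + s) + c * m₂] ![0, s, a]
      = a * ((c + s) * m₂) := by rw [phiA]; simp; try ring
  have hiso : ∀ w, step ![a * (c + s), a * m₂, 0 * (c + s) + c * m₂]
      (a * ((c + s) * m₂)) ![m₂, 0, 0] w → w = ![m₂, 0, 0] := by
    rintro w ⟨_, hw, hd⟩
    rw [dot3] at hd
    simp only [Matrix.cons_val_zero, Matrix.cons_val_one, Matrix.head_cons,
      Matrix.cons_val_two, Matrix.tail_cons, zero_mul, add_zero] at hd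
    have hw0 : w 0 ≠ 0 := by
      intro h0; rw [h0] at hd; simp at hd
    obtain ⟨k, hk, hkey⟩ := beta1_mem hm₁ hm₂ ha hcop hw
    rcases keyL (by omega) (by omega) (by assumption) hkey with ⟨e1, e2⟩ | ⟨e1, e2⟩
    · simp at e1
      have hkc : k * c = 0 := by omega
      have hk0 : k = 0 := by
        rcases Nat.mul_eq_zero.mp hkc with h' | h' <;> omega
      exact mk3 (by omega) (by omega) (by rw [hk, hk0, mul_zero])
    · exfalso; simp at e1; omega
  have hbetti : IsBetti ![a * (c + s), a * m₂, 0 * (c + s) + c * m₂]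
      (a * ((c + s) * m₂)) := by
    refine ⟨![m₂, 0, 0], ![0, c + s, 0], h1, h2, ?_⟩
    intro hr
    have := rrel_isolated hiso _ hr
    have h2' := congrFun this 0
    simp at h2'
    omega
  refine no_unique_of_three h1 h2 h3 ?_ ?_ ?_ (hup _ hbetti)
  · exact ne_of_coord 0 (by simp; omega)
  · exact ne_of_coord 0 (by simp; omega)
  · exact ne_of_coord 2 (by simp; omega)

/-- Case `c = 0` (and `b < m₂`). -/
lemma case_c0 (hm₁ : 1 < m₁) (hm₂ : 1 < m₂) (hcopm : Nat.Coprime m₁ m₂) (ha : 2 ≤ a)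
    (hbc : 2 ≤ b + c)
    (hcop : Nat.Coprime a (b * m₁ + c * m₂)) (hc0 : c = 0) (hbm : b < m₂) :
    ¬ UniquelyPresented ![a * m₁, a * m₂, b * m₁ + c * m₂] := by
  subst hc0
  intro hup
  have hb2 : 2 ≤ b := by omega
  obtain ⟨s, rfl⟩ : ∃ s, m₂ = b + s := ⟨m₂ - b, by omega⟩
  have hs : 0 < s := by omega
  have h1 : phi ![a * m₁, a * (b + s), b * m₁ + 0 * (b + s)] ![b + s, 0, 0]
      = a * (m₁ * (b + s)) := by rw [phiA]; simp; try ring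
  have h2 : phi ![a * m₁, a * (b + s), b * m₁ + 0 * (b + s)] ![0, m₁, 0]
      = a * (m₁ * (b + s)) := by rw [phiA]; simp; try ring
  have h3 : phi ![a * m₁, a * (b + s), b * m₁ + 0 * (b + s)] ![s, 0, a]
      = a * (m₁ * (b + s)) := by rw [phiA]; simp; try ring
  have hiso : ∀ w, step ![a * m₁, a * (b + s), b * m₁ + 0 * (b + s)]
      (a * (m₁ * (b + s))) ![0, m₁, 0] w → w = ![0, m₁, 0] := by
    rintro w ⟨_, hw, hd⟩
    rw [dot3] at hd
    simp only [Matrix.cons_val_zero, Matrix.cons_val_one, Matrix.head_cons,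
      Matrix.cons_val_two, Matrix.tail_cons, zero_mul, add_zero, zero_add] at hd
    have hw1 : w 1 ≠ 0 := by
      intro h0; rw [h0] at hd; simp at hd
    obtain ⟨k, hk, hkey⟩ := beta1_mem hm₁ hm₂ ha hcop hw
    rcases keyL (by omega) (by omega) (by assumption) hkey with ⟨e1, e2⟩ | ⟨e1, e2⟩
    · exfalso; simp at e2; omega
    · simp at e2
      have hkb : k * b = 0 := by omega
      have hk0 : k = 0 := by
        rcases Nat.mul_eq_zero.mp hkb with h' | h' <;> omega
      exact mk3 (by omega) (by omega) (by rw [hk, hk0, mul_zero])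
  have hbetti : IsBetti ![a * m₁, a * (b + s), b * m₁ + 0 * (b + s)]
      (a * (m₁ * (b + s))) := by
    refine ⟨![0, m₁, 0], ![b + s, 0, 0], h2, h1, ?_⟩
    intro hr
    have := rrel_isolated hiso _ hr
    have h2' := congrFun this 1
    simp at h2'
    omega
  refine no_unique_of_three h1 h2 h3 ?_ ?_ ?_ (hup _ hbetti)
  · exact ne_of_coord 0 (by simp; omega)
  · exact ne_of_coord 2 (by simp; omega)
  · exact ne_of_coord 2 (by simp; omega)

end Fwd2

/-- With `m₁, m₂` coprime and `> 1`, `a ≥ 2`, `b + c ≥ 2`, `gcd(a, b m₁ + c m₂) = 1`, the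
numerical semigroup `S = ⟨a m₁, a m₂, b m₁ + c m₂⟩` is uniquely presented iff
`0 < b < m₂` and `0 < c < m₁`. -/
theorem stmt12 (m₁ m₂ a b c : ℕ) (hm₁ : 1 < m₁) (hm₂ : 1 < m₂)
    (hcopm : Nat.Coprime m₁ m₂) (ha : 2 ≤ a) (hbc : 2 ≤ b + c)
    (hcop : Nat.Coprime a (b * m₁ + c * m₂)) :
    UniquelyPresented ![a * m₁, a * m₂, b * m₁ + c * m₂] ↔
      (0 < b ∧ b < m₂ ∧ 0 < c ∧ c < m₁) := by
  constructor
  · intro hup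
    by_contra hcon
    push_neg at hcon
    by_cases hbm : m₂ ≤ b
    · exact case_bge hm₁ hm₂ ha hbc hcop hbm hup
    by_cases hcm : m₁ ≤ c
    · exact case_cge hm₁ hm₂ ha hbc hcop hcm hup
    by_cases hb0 : b = 0
    · exact case_b0 hm₁ hm₂ hcopm ha hbc hcop hb0 (by omega) hup
    by_cases hc0 : c = 0
    · exact case_c0 hm₁ hm₂ hcopm ha hbc hcop hc0 (by omega) hup
    · omega
  · rintro ⟨hb, hbm, hc, hcm⟩
    intro n hbetti
    by_cases hn1 : n = a * (m₁ * m₂)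
    · subst hn1
      refine ⟨![m₂, 0, 0], ![0, m₁, 0], ne_of_coord 0 (by simp; omega), ?_, ?_⟩
      · exact beta1_fiber hm₁ hm₂ hcopm ha hcop hb hc
      · rw [dot3]; simp
    by_cases hn2 : n = a * (b * m₁ + c * m₂)
    · subst hn2
      refine ⟨![b, c, 0], ![0, 0, a], ne_of_coord 2 (by simp; omega), ?_, ?_⟩
      · exact beta2_fiber hm₁ hm₂ hcopm ha hbc hcop hbm hcm
      · rw [dot3]; simp
    · exfalso
      obtain ⟨u, v, hu, hv, hnr⟩ := hbetti
      exact hnr (connected hm₁ hm₂ hcopm ha hcop hn1 hn2 hu hv)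
end

section
/- With m_1, m_2 coprime and greater than one, a ≥ 2, b + c ≥ 2, gcd(a, b m_1 + c m_2) = 1, and S = ⟨a m_1, a m_2, b m_1 + c m_2⟩: a(b m_1 + c m_2) - a m_1 m_2 ∈ S if and only if b ≥ m_2 or c ≥ m_1. -/
/-- With `m₁, m₂` coprime and `> 1`, `a ≥ 2`, `b + c ≥ 2`, `gcd(a, b m₁ + c m₂) = 1` and
`S = ⟨a m₁, a m₂, b m₁ + c m₂⟩`: `a(b m₁ + c m₂) - a m₁ m₂ ∈ S` iff `b ≥ m₂` or `c ≥ m₁`. -/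
theorem stmt13 (m₁ m₂ a b c : ℕ) (hm₁ : 1 < m₁) (hm₂ : 1 < m₂)
    (hcopm : Nat.Coprime m₁ m₂) (ha : 2 ≤ a) (hbc : 2 ≤ b + c)
    (hcop : Nat.Coprime a (b * m₁ + c * m₂)) :
    (∃ s ∈ AddSubmonoid.closure ({a * m₁, a * m₂, b * m₁ + c * m₂} : Set ℕ),
        (s : ℤ) = (a : ℤ) * ((b : ℤ) * m₁ + (c : ℤ) * m₂) - (a : ℤ) * m₁ * m₂) ↔
      (m₂ ≤ b ∨ m₁ ≤ c) := by
  set d := b * m₁ + c * m₂ with hd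
  have hdpos : 0 < d := by
    rcases Nat.lt_or_ge b 1 with hb | hb
    · have h1 : 1 ≤ c := by omega
      have : m₂ ≤ c * m₂ := Nat.le_mul_of_pos_left _ h1
      omega
    · have : m₁ ≤ b * m₁ := Nat.le_mul_of_pos_left _ hb
      omega
  constructor
  · rintro ⟨s, hs, heq⟩
    have hrep : ∃ p q r : ℕ, s = p * (a * m₁) + q * (a * m₂) + r * d := by
      clear heq
      induction hs using AddSubmonoid.closure_induction with
      | mem w hw =>
        rcases hw with rfl | rfl | rfl
        · exact ⟨1, 0, 0, by ring⟩
        · exact ⟨0, 1, 0, by ring⟩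
        · exact ⟨0, 0, 1, by ring⟩
      | zero => exact ⟨0, 0, 0, by ring⟩
      | add u v _ _ hu hv =>
        obtain ⟨p, q, r, rfl⟩ := hu
        obtain ⟨p', q', r', rfl⟩ := hv
        exact ⟨p + p', q + q', r + r', by ring⟩
    obtain ⟨p, q, r, rfl⟩ := hrep
    have hnat : p * (a * m₁) + q * (a * m₂) + r * d + a * (m₁ * m₂) = a * d := by
      have h6 : ((p * (a * m₁) + q * (a * m₂) + r * d + a * (m₁ * m₂) : ℕ) : ℤ)
          = ((a * d : ℕ) : ℤ) := by
        push_cast [hd]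
        push_cast [hd] at heq
        linarith
      exact_mod_cast h6
    have hapos : 0 < a := by omega
    have hsd : a ∣ r * d := by
      have h1 : a ∣ p * (a * m₁) + q * (a * m₂) + r * d := by
        have h2 : a ∣ a * d := dvd_mul_right a d
        have h3 : a ∣ a * (m₁ * m₂) := dvd_mul_right a _
        have h7 := Nat.dvd_sub (hnat ▸ h2) h3
        simpa using h7
      have h4 : a ∣ p * (a * m₁) + q * (a * m₂) :=
        Dvd.dvd.add (Dvd.dvd.mul_left (dvd_mul_right a m₁) p)
          (Dvd.dvd.mul_left (dvd_mul_right a m₂) q)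
      have h8 := Nat.dvd_sub h1 h4
      rwa [Nat.add_sub_cancel_left] at h8
    have har : a ∣ r := hcop.dvd_of_dvd_mul_right hsd
    have hr0 : r = 0 := by
      by_contra hr
      have hra : a ≤ r := Nat.le_of_dvd (Nat.pos_of_ne_zero hr) har
      have h9 : a * d ≤ r * d := Nat.mul_le_mul_right d hra
      have hmm : 0 < a * (m₁ * m₂) := by positivity
      omega
    subst hr0
    have key : p * m₁ + q * m₂ + m₁ * m₂ = b * m₁ + c * m₂ := by
      have h5 : a * (p * m₁ + q * m₂ + m₁ * m₂) = a * (b * m₁ + c * m₂) := by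
        rw [← hd, ← hnat]; ring
      exact Nat.eq_of_mul_eq_mul_left hapos h5
    by_contra hcon
    push_neg at hcon
    obtain ⟨hb, hc⟩ := hcon
    have hmod1 : p * m₁ % m₂ = b * m₁ % m₂ := by
      have h10 : (p * m₁ + q * m₂ + m₁ * m₂) % m₂ = (b * m₁ + c * m₂) % m₂ := by rw [key]
      simpa [Nat.add_mul_mod_self_right, Nat.mul_mod_left] using h10
    have hpb : p % m₂ = b % m₂ :=
      Nat.ModEq.cancel_right_of_coprime (by simpa using hcopm.symm) hmod1
    have hmod2 : q * m₂ % m₁ = c * m₂ % m₁ := by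
      have h11 : (q * m₂ + p * m₁ + m₁ * m₂) % m₁ = (c * m₂ + b * m₁) % m₁ := by
        rw [show q * m₂ + p * m₁ + m₁ * m₂ = p * m₁ + q * m₂ + m₁ * m₂ by ring, key]
        ring_nf
      simpa [Nat.add_mul_mod_self_right, Nat.mul_mod_left, Nat.mul_mod_right] using h11
    have hqc : q % m₁ = c % m₁ :=
      Nat.ModEq.cancel_right_of_coprime (by simpa using hcopm) hmod2
    have hbp : b = p % m₂ := by rw [hpb, Nat.mod_eq_of_lt hb]
    have hcq : c = q % m₁ := by rw [hqc, Nat.mod_eq_of_lt hc]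
    have hp : p = p / m₂ * m₂ + b :=
      calc p = m₂ * (p / m₂) + p % m₂ := (Nat.div_add_mod p m₂).symm
        _ = p / m₂ * m₂ + b := by rw [← hbp, Nat.mul_comm]
    have hq : q = q / m₁ * m₁ + c :=
      calc q = m₁ * (q / m₁) + q % m₁ := (Nat.div_add_mod q m₁).symm
        _ = q / m₁ * m₁ + c := by rw [← hcq, Nat.mul_comm]
    set K := p / m₂
    set L := q / m₁
    rw [hp, hq] at key
    have hexp : (K * m₂ + b) * m₁ + (L * m₁ + c) * m₂ + m₁ * m₂
        = b * m₁ + c * m₂ + (K * m₂ * m₁ + L * m₁ * m₂ + m₁ * m₂) := by ring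
    rw [hexp] at key
    have hX : m₁ * m₂ = 0 := by omega
    rcases Nat.mul_eq_zero.mp hX with h | h <;> omega
  · have hx1 : a * m₁ ∈ AddSubmonoid.closure ({a * m₁, a * m₂, d} : Set ℕ) :=
      AddSubmonoid.subset_closure (by simp)
    have hx2 : a * m₂ ∈ AddSubmonoid.closure ({a * m₁, a * m₂, d} : Set ℕ) :=
      AddSubmonoid.subset_closure (by simp)
    rintro (hb | hc)
    · refine ⟨(b - m₂) * (a * m₁) + c * (a * m₂), ?_, ?_⟩
      · exact AddSubmonoid.add_mem _
          (by simpa [smul_eq_mul] using AddSubmonoid.nsmul_mem _ hx1 (b - m₂))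
          (by simpa [smul_eq_mul] using AddSubmonoid.nsmul_mem _ hx2 c)
      · push_cast [Nat.cast_sub hb]; ring
    · refine ⟨b * (a * m₁) + (c - m₁) * (a * m₂), ?_, ?_⟩
      · exact AddSubmonoid.add_mem _
          (by simpa [smul_eq_mul] using AddSubmonoid.nsmul_mem _ hx1 b)
          (by simpa [smul_eq_mul] using AddSubmonoid.nsmul_mem _ hx2 (c - m₁))
      · push_cast [Nat.cast_sub hc]; ring
end

section
/- Let a > x ≥ 4 be integers with a ≥ 2 and S = ⟨a, a+1, ..., a+x⟩. Then the element 2(a+2) is a Betti element of S with at least three factorizations, so S is not uniquely presented. -/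
open Finset

variable {M : Type*} [AddCommMonoid M] {r : ℕ}

/-- For integers `a > x ≥ 4`, in `S = ⟨a, a+1, …, a+x⟩` the element `2(a+2)` is a Betti
element with at least three factorizations, so `S` is not uniquely presented. -/
theorem stmt18 (a x : ℕ) (hx : 4 ≤ x) (hxa : x < a) :
    IsBetti (fun i : Fin (x + 1) => a + (i : ℕ)) (2 * (a + 2)) ∧
    3 ≤ {w : Fin (x + 1) → ℕ |
        phi (fun i : Fin (x + 1) => a + (i : ℕ)) w = 2 * (a + 2)}.encard ∧
    ¬ UniquelyPresented (fun i : Fin (x + 1) => a + (i : ℕ)) := by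
  have ha5 : 5 ≤ a := by omega
  set A : Fin (x + 1) → ℕ := fun i : Fin (x + 1) => a + (i : ℕ) with hA
  have p0 : 0 < x + 1 := by omega
  have p1 : 1 < x + 1 := by omega
  have p2 : 2 < x + 1 := by omega
  have p3 : 3 < x + 1 := by omega
  have p4 : 4 < x + 1 := by omega
  set i0 : Fin (x + 1) := ⟨0, p0⟩ with hi0
  set i1 : Fin (x + 1) := ⟨1, p1⟩ with hi1
  set i2 : Fin (x + 1) := ⟨2, p2⟩ with hi2
  set i3 : Fin (x + 1) := ⟨3, p3⟩ with hi3
  set i4 : Fin (x + 1) := ⟨4, p4⟩ with hi4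
  set u : Fin (x + 1) → ℕ := fun i => if (i : ℕ) = 0 ∨ (i : ℕ) = 4 then 1 else 0 with hu
  set v : Fin (x + 1) → ℕ := fun i => if (i : ℕ) = 1 ∨ (i : ℕ) = 3 then 1 else 0 with hv
  set t2 : Fin (x + 1) → ℕ := fun i => if (i : ℕ) = 2 then 2 else 0 with ht2
  have hphi : ∀ w : Fin (x + 1) → ℕ, phi A w = ∑ i, w i * (a + (i : ℕ)) := by
    intro w; simp [phi, hA, smul_eq_mul]
  -- sums of functions vanishing above index 4
  have hT : ∀ f : Fin (x + 1) → ℕ, (∀ i : Fin (x + 1), 5 ≤ (i : ℕ) → f i = 0) →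
      ∑ i, f i = f i0 + f i1 + f i2 + f i3 + f i4 := by
    intro f hf
    rw [← Finset.sum_subset (Finset.subset_univ ({i0, i1, i2, i3, i4} : Finset (Fin (x + 1))))
        (fun i _ hi => hf i (by
          simp only [Finset.mem_insert, Finset.mem_singleton, hi0, hi1, hi2, hi3, hi4,
            Fin.ext_iff] at hi
          push_neg at hi
          omega))]
    rw [Finset.sum_insert (by simp [hi0, hi1, hi2, hi3, hi4, Fin.ext_iff]),
        Finset.sum_insert (by simp [hi1, hi2, hi3, hi4, Fin.ext_iff]),
        Finset.sum_insert (by simp [hi2, hi3, hi4, Fin.ext_iff]),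
        Finset.sum_pair (by simp [hi3, hi4, Fin.ext_iff])]
    ring
  have hu5 : ∀ i : Fin (x + 1), 5 ≤ (i : ℕ) → u i = 0 := by
    intro i hi; simp only [hu]; rw [if_neg (by omega)]
  have hv5 : ∀ i : Fin (x + 1), 5 ≤ (i : ℕ) → v i = 0 := by
    intro i hi; simp only [hv]; rw [if_neg (by omega)]
  have ht5 : ∀ i : Fin (x + 1), 5 ≤ (i : ℕ) → t2 i = 0 := by
    intro i hi; simp only [ht2]; rw [if_neg (by omega)]
  -- values of u, v, t2 at i0..i4
  have hu0 : u i0 = 1 := by simp [hu, hi0]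
  have hu1 : u i1 = 0 := by simp [hu, hi1]
  have hu2 : u i2 = 0 := by simp [hu, hi2]
  have hu3 : u i3 = 0 := by simp [hu, hi3]
  have hu4 : u i4 = 1 := by simp [hu, hi4]
  have hv0 : v i0 = 0 := by simp [hv, hi0]
  have hv1 : v i1 = 1 := by simp [hv, hi1]
  have hv2 : v i2 = 0 := by simp [hv, hi2]
  have hv3 : v i3 = 1 := by simp [hv, hi3]
  have hv4 : v i4 = 0 := by simp [hv, hi4]
  have ht0 : t2 i0 = 0 := by simp [ht2, hi0]
  have ht1 : t2 i1 = 0 := by simp [ht2, hi1]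
  have htt2 : t2 i2 = 2 := by simp [ht2, hi2]
  have ht3 : t2 i3 = 0 := by simp [ht2, hi3]
  have ht4v : t2 i4 = 0 := by simp [ht2, hi4]
  have hval0 : (i0 : ℕ) = 0 := by simp [hi0]
  have hval1 : (i1 : ℕ) = 1 := by simp [hi1]
  have hval2 : (i2 : ℕ) = 2 := by simp [hi2]
  have hval3 : (i3 : ℕ) = 3 := by simp [hi3]
  have hval4 : (i4 : ℕ) = 4 := by simp [hi4]
  -- phi values of the three factorizations
  have hphiu : phi A u = 2 * (a + 2) := by
    have e1 : (∑ i, u i * (a + (i : ℕ))) = u i0 * (a + (i0 : ℕ)) + u i1 * (a + (i1 : ℕ)) +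
        u i2 * (a + (i2 : ℕ)) + u i3 * (a + (i3 : ℕ)) + u i4 * (a + (i4 : ℕ)) :=
      hT _ (fun i hi => show u i * (a + (i : ℕ)) = 0 by rw [hu5 i hi, zero_mul])
    rw [hphi, e1, hu0, hu1, hu2, hu3, hu4, hval0, hval1, hval2, hval3, hval4]; ring
  have hphiv : phi A v = 2 * (a + 2) := by
    have e1 : (∑ i, v i * (a + (i : ℕ))) = v i0 * (a + (i0 : ℕ)) + v i1 * (a + (i1 : ℕ)) +
        v i2 * (a + (i2 : ℕ)) + v i3 * (a + (i3 : ℕ)) + v i4 * (a + (i4 : ℕ)) :=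
      hT _ (fun i hi => show v i * (a + (i : ℕ)) = 0 by rw [hv5 i hi, zero_mul])
    rw [hphi, e1, hv0, hv1, hv2, hv3, hv4, hval0, hval1, hval2, hval3, hval4]; ring
  have hphit : phi A t2 = 2 * (a + 2) := by
    have e1 : (∑ i, t2 i * (a + (i : ℕ))) = t2 i0 * (a + (i0 : ℕ)) + t2 i1 * (a + (i1 : ℕ)) +
        t2 i2 * (a + (i2 : ℕ)) + t2 i3 * (a + (i3 : ℕ)) + t2 i4 * (a + (i4 : ℕ)) :=
      hT _ (fun i hi => show t2 i * (a + (i : ℕ)) = 0 by rw [ht5 i hi, zero_mul])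
    rw [hphi, e1, ht0, ht1, htt2, ht3, ht4v, hval0, hval1, hval2, hval3, hval4]; ring
  -- pairwise disjoint supports
  have hduv : (∑ i, u i * v i) = 0 := by
    apply Finset.sum_eq_zero; intro i _
    simp only [hu, hv]; split_ifs with h1 h2 <;> omega
  have hdut : (∑ i, u i * t2 i) = 0 := by
    apply Finset.sum_eq_zero; intro i _
    simp only [hu, ht2]; split_ifs with h1 h2 <;> omega
  have hdvt : (∑ i, v i * t2 i) = 0 := by
    apply Finset.sum_eq_zero; intro i _
    simp only [hv, ht2]; split_ifs with h1 h2 <;> omega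
  have hdot_comm : ∀ w z : Fin (x + 1) → ℕ, (∑ i, w i * z i) = ∑ i, z i * w i := by
    intro w z; apply Finset.sum_congr rfl; intro i _; ring
  -- distinctness
  have huv : u ≠ v := by
    intro h; have := congrFun h i0; rw [hu0, hv0] at this; exact one_ne_zero this
  have hut : u ≠ t2 := by
    intro h; have := congrFun h i0; rw [hu0, ht0] at this; exact one_ne_zero this
  have hvt : v ≠ t2 := by
    intro h; have := congrFun h i1; rw [hv1, ht1] at this; exact one_ne_zero this
  -- two vectors vanishing above 4 and agreeing on i0..i4 are equal
  have agree : ∀ w z : Fin (x + 1) → ℕ,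
      (∀ i : Fin (x + 1), 5 ≤ (i : ℕ) → w i = 0) →
      (∀ i : Fin (x + 1), 5 ≤ (i : ℕ) → z i = 0) →
      w i0 = z i0 → w i1 = z i1 → w i2 = z i2 → w i3 = z i3 → w i4 = z i4 → w = z := by
    intro w z hw hz h0 h1 h2 h3 h4
    funext i
    obtain ⟨iv, hlt⟩ := i
    rcases Nat.lt_or_ge iv 5 with h5 | h5
    · interval_cases iv
      exacts [h0, h1, h2, h3, h4]
    · rw [hw ⟨iv, hlt⟩ h5, hz ⟨iv, hlt⟩ h5]
  -- the fiber characterization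
  have key : ∀ w : Fin (x + 1) → ℕ, phi A w = 2 * (a + 2) → w = u ∨ w = v ∨ w = t2 := by
    intro w hw
    rw [hphi] at hw
    have hsplit : (∑ i, w i) * a + (∑ i, w i * (i : ℕ)) = 2 * (a + 2) := by
      rw [Finset.sum_mul, ← Finset.sum_add_distrib, ← hw]
      apply Finset.sum_congr rfl; intro i _; ring
    have htle : (∑ i, w i * (i : ℕ)) ≤ (∑ i, w i) * x := by
      rw [Finset.sum_mul]
      apply Finset.sum_le_sum
      intro i _
      exact Nat.mul_le_mul_left _ (by have := i.isLt; omega)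
    have hs2 : (∑ i, w i) = 2 := by
      rcases Nat.lt_or_ge (∑ i, w i) 2 with h | h
      · exfalso
        have h1 : (∑ i, w i) * a ≤ 1 * a := Nat.mul_le_mul_right a (by omega)
        have h2 : (∑ i, w i) * x ≤ 1 * x := Nat.mul_le_mul_right x (by omega)
        omega
      · rcases Nat.lt_or_ge (∑ i, w i) 3 with h' | h'
        · omega
        · exfalso
          have h1 : 3 * a ≤ (∑ i, w i) * a := Nat.mul_le_mul_right a h'
          omega
    have ht4 : (∑ i, w i * (i : ℕ)) = 4 := by rw [hs2] at hsplit; omega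
    have hzero : ∀ i : Fin (x + 1), 5 ≤ (i : ℕ) → w i = 0 := by
      intro i hi
      by_contra hne
      have h1 : (i : ℕ) ≤ w i * (i : ℕ) := Nat.le_mul_of_pos_left _ (by omega)
      have h2 : w i * (i : ℕ) ≤ ∑ j, w j * (j : ℕ) :=
        Finset.single_le_sum (f := fun j => w j * (j : ℕ)) (fun j _ => Nat.zero_le _)
          (Finset.mem_univ i)
      omega
    have hsum1 := hT w hzero
    have hsum2 : (∑ i, w i * (i : ℕ)) = w i0 * 0 + w i1 * 1 +
        w i2 * 2 + w i3 * 3 + w i4 * 4 :=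
      hT _ (fun i hi => show w i * (i : ℕ) = 0 by rw [hzero i hi, zero_mul])
    rw [hsum1] at hs2
    rw [hsum2] at ht4
    have hcases : (w i0 = 1 ∧ w i1 = 0 ∧ w i2 = 0 ∧ w i3 = 0 ∧ w i4 = 1) ∨
        (w i0 = 0 ∧ w i1 = 1 ∧ w i2 = 0 ∧ w i3 = 1 ∧ w i4 = 0) ∨
        (w i0 = 0 ∧ w i1 = 0 ∧ w i2 = 2 ∧ w i3 = 0 ∧ w i4 = 0) := by
      set a0 := w i0; set a1 := w i1; set a2 := w i2; set a3 := w i3; set a4 := w i4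
      have b0 : a0 ≤ 2 := by omega
      have b1 : a1 ≤ 2 := by omega
      have b2 : a2 ≤ 2 := by omega
      have b3 : a3 ≤ 2 := by omega
      have b4 : a4 ≤ 2 := by omega
      interval_cases a0 <;> interval_cases a1 <;> interval_cases a2 <;> interval_cases a3 <;>
        interval_cases a4 <;> omega
    rcases hcases with ⟨c0, c1, c2, c3, c4⟩ | ⟨c0, c1, c2, c3, c4⟩ | ⟨c0, c1, c2, c3, c4⟩
    · exact Or.inl (agree w u hzero hu5 (by rw [c0, hu0]) (by rw [c1, hu1])
        (by rw [c2, hu2]) (by rw [c3, hu3]) (by rw [c4, hu4]))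
    · exact Or.inr (Or.inl (agree w v hzero hv5 (by rw [c0, hv0]) (by rw [c1, hv1])
        (by rw [c2, hv2]) (by rw [c3, hv3]) (by rw [c4, hv4])))
    · exact Or.inr (Or.inr (agree w t2 hzero ht5 (by rw [c0, ht0]) (by rw [c1, ht1])
        (by rw [c2, htt2]) (by rw [c3, ht3]) (by rw [c4, ht4v])))
  -- u is alone in its R-class
  have hchain : ∀ z : Fin (x + 1) → ℕ, Rrel A (2 * (a + 2)) u z → z = u := by
    intro z hz
    induction hz with
    | refl => rfl
    | tail hab hstep ih =>
      obtain ⟨hb, hc, hdot⟩ := hstep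
      rw [ih] at hdot
      rcases key _ hc with h | h | h
      · exact h
      · exfalso; rw [h] at hdot; exact hdot hduv
      · exfalso; rw [h] at hdot; exact hdot hdut
  have hnotR : ¬ Rrel A (2 * (a + 2)) u v := fun h => huv (hchain v h).symm
  have hbetti : IsBetti A (2 * (a + 2)) := ⟨u, v, hphiu, hphiv, hnotR⟩
  -- the fiber equals {u, v, t2}
  have hfiber : {w : Fin (x + 1) → ℕ | phi A w = 2 * (a + 2)} = {u, v, t2} := by
    ext w
    simp only [Set.mem_setOf_eq, Set.mem_insert_iff, Set.mem_singleton_iff]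
    constructor
    · exact key w
    · rintro (rfl | rfl | rfl)
      · exact hphiu
      · exact hphiv
      · exact hphit
  have hencard : {w : Fin (x + 1) → ℕ | phi A w = 2 * (a + 2)}.encard = 3 := by
    rw [hfiber]
    rw [Set.encard_insert_of_notMem (by simp [hut, huv]),
      Set.encard_pair hvt]
    rfl
  refine ⟨hbetti, le_of_eq hencard.symm, ?_⟩
  intro hup
  obtain ⟨p, q, hpq, hset, _⟩ := hup (2 * (a + 2)) hbetti
  rw [hset, Set.encard_pair hpq] at hencard
  exact (by norm_num : (2 : ℕ∞) ≠ 3) hencard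
end

section
/- Define numerical semigroups S_i recursively: S_1 = ⟨2,3⟩, and if S_i is minimally generated by {a_1,...,a_{i+1}}, then S_{i+1} = ⟨2a_1, a_1+a_2, 2a_2, ..., 2a_{i+1}⟩. Then for every i ≥ 1, S_{i+1} is the gluing of 2S_i and ⟨a_1+a_2⟩ with d = 2a_1 + 2a_2, Betti(S_{i+1}) = {2a_1+2a_2, 2(2a_2), ..., 2(2a_{i+1})}, and S_{i+1} is uniquely presented. -/
open Finset

variable {M : Type*} [AddCommMonoid M] {r : ℕ}

/-- `gens i` is the tuple of minimal generators of the numerical semigroup `S_{i+1}` of the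
recursive family: `S₁ = ⟨2,3⟩`, and if `S_i` is minimally generated by `a₁,…,a_{i+1}` then
`S_{i+1} = ⟨2a₁, a₁+a₂, 2a₂, …, 2a_{i+1}⟩`. -/
def gens : (i : ℕ) → (Fin (i + 2) → ℕ)
  | 0 => ![2, 3]
  | (i + 1) =>
      Fin.cons (2 * gens i 0)
        (Fin.cons (gens i 0 + gens i 1) (fun j : Fin (i + 1) => 2 * gens i j.succ))

def eps : ℕ → ℕ
  | 0 => 0
  | (k+1) => 2^k

/-- The generators in closed form. -/
def AA (m : ℕ) : Fin (m+1) → ℕ := fun k => 2^m + eps k.val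

lemma phi_nat (A : Fin r → ℕ) (u : Fin r → ℕ) : phi A u = ∑ i, u i * A i := by
  simp [phi, smul_eq_mul]

lemma phi_add (A : Fin r → ℕ) (u v : Fin r → ℕ) :
    phi A (u + v) = phi A u + phi A v := by
  simp [phi_nat, add_mul, Finset.sum_add_distrib]

lemma phi_single (A : Fin r → ℕ) (j : Fin r) (c : ℕ) :
    phi A (Pi.single j c) = c * A j := by
  rw [phi_nat]
  rw [Finset.sum_eq_single j]
  · simp
  · intro b _ hb; simp [Pi.single_apply, hb]
  · simp

lemma phi_AA {m : ℕ} (u : Fin (m+1) → ℕ) :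
    phi (AA m) u = (∑ k, u k) * 2^m + ∑ k, u k * eps k.val := by
  rw [phi_nat]
  have hsp : ∀ k : Fin (m+1), u k * AA m k = u k * 2^m + u k * eps k.val := by
    intro k; simp [AA]; ring
  rw [Finset.sum_congr rfl (fun k _ => hsp k), Finset.sum_add_distrib, Finset.sum_mul]

lemma eps_le {m k : ℕ} (h : k ≤ m) : 2 * eps k ≤ 2^m := by
  cases k with
  | zero => simp [eps]
  | succ t =>
    show 2 * 2^t ≤ 2^m
    rw [← pow_succ']
    exact Nat.pow_le_pow_right (by norm_num) h

lemma two_pow_inj {x y : ℕ} (h : 2^x = 2^y) : x = y :=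
  Nat.pow_right_injective (le_refl 2) h

lemma two_pow_add {x y z : ℕ} (h : 2^x + 2^y = 2^z) : x = y ∧ z = x + 1 := by
  have hxy : x = y := by
    rcases lt_trichotomy x y with hlt | he | hgt
    · exfalso
      have hp : 0 < (2:ℕ)^x := by positivity
      have hxy2 : (2:ℕ)^x < 2^y := Nat.pow_lt_pow_right (by norm_num) hlt
      have h1 : 2^y < 2^z := by omega
      have hyy : (2:ℕ)^(y+1) = 2^y + 2^y := by ring
      have h2 : 2^z < 2^(y+1) := by omega
      have := (Nat.pow_lt_pow_iff_right (a := 2) (by norm_num)).1 h1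
      have := (Nat.pow_lt_pow_iff_right (a := 2) (by norm_num)).1 h2
      omega
    · exact he
    · exfalso
      have hp : 0 < (2:ℕ)^y := by positivity
      have hxy2 : (2:ℕ)^y < 2^x := Nat.pow_lt_pow_right (by norm_num) hgt
      have h1 : 2^x < 2^z := by omega
      have hxx : (2:ℕ)^(x+1) = 2^x + 2^x := by ring
      have h2 : 2^z < 2^(x+1) := by omega
      have := (Nat.pow_lt_pow_iff_right (a := 2) (by norm_num)).1 h1
      have := (Nat.pow_lt_pow_iff_right (a := 2) (by norm_num)).1 h2
      omega
  subst hxy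
  constructor
  · rfl
  · have : (2:ℕ)^x + 2^x = 2^(x+1) := by ring
    rw [this] at h
    exact (two_pow_inj h).symm

lemma sum_two_pow (n : ℕ) : ∑ j : Fin n, 2^(j:ℕ) = 2^n - 1 := by
  induction n with
  | zero => simp
  | succ n ih =>
    rw [Fin.sum_univ_castSucc]
    simp only [Fin.coe_castSucc, Fin.val_last, ih]
    have : 0 < (2:ℕ)^n := by positivity
    have h2 : (2:ℕ)^(n+1) = 2^n + 2^n := by ring
    omega

lemma bits_inj : ∀ {n : ℕ} (f g : Fin n → ℕ), (∀ j, f j ≤ 1) → (∀ j, g j ≤ 1) →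
    (∑ j, f j * 2^(j:ℕ)) = (∑ j, g j * 2^(j:ℕ)) → f = g := by
  intro n
  induction n with
  | zero => intro f g _ _ _; funext j; exact absurd j.2 (by omega)
  | succ n ih =>
    intro f g hf hg h
    rw [Fin.sum_univ_succ, Fin.sum_univ_succ] at h
    have hre : ∀ (u : Fin (n+1) → ℕ),
        (∑ j : Fin n, u j.succ * 2^((j.succ : Fin (n+1)):ℕ)) = 2 * ∑ j : Fin n, u j.succ * 2^(j:ℕ) := by
      intro u
      rw [Finset.mul_sum]
      congr 1; funext j
      simp [Fin.val_succ, pow_succ]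
      ring
    rw [hre f, hre g] at h
    simp only [Fin.val_zero, pow_zero, mul_one] at h
    have h0 : f 0 = g 0 := by have := hf 0; have := hg 0; omega
    have ht : (∑ j : Fin n, f j.succ * 2^(j:ℕ)) = ∑ j : Fin n, g j.succ * 2^(j:ℕ) := by omega
    have := ih (fun j => f j.succ) (fun j => g j.succ) (fun j => hf j.succ) (fun j => hg j.succ) ht
    funext k
    refine Fin.cases h0 (fun j => ?_) k
    exact congrFun this j

/-- reindex the eps-weighted sum -/
lemma E_reindex {m : ℕ} (u : Fin (m+1) → ℕ) :
    (∑ k, u k * eps k.val) = ∑ j : Fin m, u j.succ * 2^(j:ℕ) := by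
  rw [Fin.sum_univ_succ]
  simp only [Fin.val_zero]
  show u 0 * eps 0 + _ = _
  simp only [eps, mul_zero, zero_add]
  congr 1

lemma E_lt {m : ℕ} (u : Fin (m+1) → ℕ) (hu : ∀ k, k ≠ 0 → u k ≤ 1) :
    (∑ k, u k * eps k.val) < 2^m := by
  rw [E_reindex]
  have hle : (∑ j : Fin m, u j.succ * 2^(j:ℕ)) ≤ ∑ j : Fin m, 2^(j:ℕ) := by
    apply Finset.sum_le_sum
    intro j _
    have := hu j.succ (Fin.succ_ne_zero j)
    nlinarith [pow_pos (show 0 < 2 by norm_num) (j : ℕ)]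
  rw [sum_two_pow] at hle
  have : 0 < (2:ℕ)^m := by positivity
  omega

lemma red_unique {m : ℕ} (u v : Fin (m+1) → ℕ) (hu : ∀ k, k ≠ 0 → u k ≤ 1)
    (hv : ∀ k, k ≠ 0 → v k ≤ 1) (h : phi (AA m) u = phi (AA m) v) : u = v := by
  rw [phi_AA, phi_AA] at h
  have hEu := E_lt u hu
  have hEv := E_lt v hv
  have hp : 0 < (2:ℕ)^m := by positivity
  -- L and E agree
  have hL : (∑ k, u k) = ∑ k, v k := by
    by_contra hne
    rcases Nat.lt_or_ge (∑ k, u k) (∑ k, v k) with hlt | hge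
    · have : (∑ k, u k) * 2^m + 2^m ≤ (∑ k, v k) * 2^m := by
        have : (∑ k, u k) + 1 ≤ ∑ k, v k := hlt
        calc (∑ k, u k) * 2^m + 2^m = ((∑ k, u k) + 1) * 2^m := by ring
        _ ≤ (∑ k, v k) * 2^m := Nat.mul_le_mul_right _ this
      omega
    · have hlt2 : (∑ k, v k) < ∑ k, u k := by omega
      have : (∑ k, v k) * 2^m + 2^m ≤ (∑ k, u k) * 2^m := by
        calc (∑ k, v k) * 2^m + 2^m = ((∑ k, v k) + 1) * 2^m := by ring
        _ ≤ (∑ k, u k) * 2^m := Nat.mul_le_mul_right _ hlt2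
      omega
  have hE : (∑ k, u k * eps k.val) = ∑ k, v k * eps k.val := by
    rw [hL] at h; omega
  rw [E_reindex, E_reindex] at hE
  have htail := bits_inj (fun j => u j.succ) (fun j => v j.succ)
    (fun j => hu j.succ (Fin.succ_ne_zero j)) (fun j => hv j.succ (Fin.succ_ne_zero j)) hE
  have h0 : u 0 = v 0 := by
    rw [Fin.sum_univ_succ, Fin.sum_univ_succ] at hL
    have : (∑ j : Fin m, u j.succ) = ∑ j : Fin m, v j.succ := by
      refine Finset.sum_congr rfl fun j _ => congrFun htail j
    omega
  funext k
  refine Fin.cases h0 (fun j => congrFun htail j) k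

lemma phi_ge {m : ℕ} (u : Fin (m+1) → ℕ) : (∑ k, u k) * 2^m ≤ phi (AA m) u := by
  rw [phi_AA]; omega

lemma phi_le {m : ℕ} (u : Fin (m+1) → ℕ) : 2 * phi (AA m) u ≤ 3 * ((∑ k, u k) * 2^m) := by
  rw [phi_AA]
  have hE : 2 * (∑ k, u k * eps k.val) ≤ (∑ k, u k) * 2^m := by
    rw [Finset.mul_sum, Finset.sum_mul]
    apply Finset.sum_le_sum
    intro k _
    calc 2 * (u k * eps k.val) = u k * (2 * eps k.val) := by ring
    _ ≤ u k * 2^m := Nat.mul_le_mul_left _ (eps_le (by omega))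
  omega

lemma sum_eq_two {n : ℕ} (w : Fin n → ℕ) (h : ∑ j, w j = 2) :
    ∃ a b, w = Pi.single a 1 + Pi.single b 1 := by
  have hex : ∃ a, w a ≠ 0 := by
    by_contra hc
    push_neg at hc
    rw [Finset.sum_eq_zero (fun j _ => hc j)] at h
    omega
  obtain ⟨a, ha⟩ := hex
  have hsplit := Finset.add_sum_erase Finset.univ w (Finset.mem_univ a)
  rw [h] at hsplit
  have hle : w a ≤ 2 := by
    have := Finset.single_le_sum (f := w) (fun i _ => Nat.zero_le _) (Finset.mem_univ a)
    omega
  rcases (by omega : w a = 1 ∨ w a = 2) with h1 | h2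
  · -- second nonzero elsewhere
    have hs1 : ∑ x ∈ Finset.univ.erase a, w x = 1 := by omega
    have hex2 : ∃ b ∈ Finset.univ.erase a, w b ≠ 0 := by
      by_contra hc
      push_neg at hc
      rw [Finset.sum_eq_zero hc] at hs1
      omega
    obtain ⟨b, hbmem, hb⟩ := hex2
    have hba : b ≠ a := (Finset.mem_erase.1 hbmem).1
    have hsplit2 := Finset.add_sum_erase (Finset.univ.erase a) w hbmem
    rw [hs1] at hsplit2
    have hwb : w b = 1 := by
      have h0 : 0 ≤ ∑ x ∈ (Finset.univ.erase a).erase b, w x := Nat.zero_le _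
      omega
    have hrest : ∀ j, j ≠ a → j ≠ b → w j = 0 := by
      intro j hja hjb
      have hsr : ∑ x ∈ (Finset.univ.erase a).erase b, w x = 0 := by omega
      have := (Finset.sum_eq_zero_iff).1 hsr j
        (by simp [Finset.mem_erase, hja, hjb])
      exact this
    refine ⟨a, b, ?_⟩
    funext j
    by_cases hja : j = a
    · subst hja; simp [Pi.single_apply, hba, h1, Ne.symm hba]
    · by_cases hjb : j = b
      · subst hjb; simp [Pi.single_apply, hwb, hja]
      · simp [Pi.single_apply, hja, hjb, hrest j hja hjb]
  · have hs0 : ∑ x ∈ Finset.univ.erase a, w x = 0 := by omega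
    have hrest : ∀ j, j ≠ a → w j = 0 := by
      intro j hja
      exact (Finset.sum_eq_zero_iff).1 hs0 j (by simp [Finset.mem_erase, hja])
    refine ⟨a, a, ?_⟩
    funext j
    by_cases hja : j = a
    · subst hja; simp [Pi.single_apply, h2]
    · simp [Pi.single_apply, hja, hrest j hja]

/-- the second factorization of `2 * AA m k` -/
def partner (m : ℕ) (k : Fin (m+1)) : Fin (m+1) → ℕ :=
  if h : k.val < m then Pi.single 0 1 + Pi.single ⟨k.val+1, by omega⟩ 1 else Pi.single 0 3

lemma kval_pos {m : ℕ} {k : Fin (m+1)} (hk : k ≠ 0) : 0 < k.val := by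
  rcases Nat.eq_zero_or_pos k.val with h | h
  · exact absurd (Fin.ext h : k = 0) hk
  · exact h

lemma partner_phi {m : ℕ} (k : Fin (m+1)) (hk : k ≠ 0) :
    phi (AA m) (partner m k) = 2 * AA m k := by
  have hkp := kval_pos hk
  obtain ⟨t, ht⟩ : ∃ t, k.val = t + 1 := ⟨k.val - 1, by omega⟩
  unfold partner
  split_ifs with h
  · rw [phi_add, phi_single, phi_single]
    show 1 * AA m 0 + 1 * AA m ⟨k.val+1, _⟩ = 2 * AA m k
    simp only [AA, ht]
    show 1 * (2^m + eps 0) + 1 * (2^m + eps (t+1+1)) = 2 * (2^m + eps (t+1))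
    simp only [eps]
    ring
  · have hm : k.val = m := by omega
    rw [phi_single]
    show 3 * AA m 0 = 2 * AA m k
    have h0 : AA m 0 = 2^m := by
      show 2^m + eps 0 = 2^m
      simp [eps]
    have hm' : m = t + 1 := by omega
    have h1 : AA m k = 2^m + 2^t := by
      show 2^m + eps k.val = 2^m + 2^t
      rw [ht]; rfl
    rw [h0, h1, hm']
    ring
  
lemma partner_zero_pos {m : ℕ} (k : Fin (m+1)) : 1 ≤ partner m k 0 := by
  unfold partner
  split_ifs with h <;> simp [Pi.single_apply]

lemma single_ne_partner {m : ℕ} (k : Fin (m+1)) (hk : k ≠ 0) :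
    (Pi.single k 2 : Fin (m+1) → ℕ) ≠ partner m k := by
  intro hc
  have h0 : (Pi.single k 2 : Fin (m+1) → ℕ) 0 = partner m k 0 := congrFun hc 0
  rw [Pi.single_apply] at h0
  have := partner_zero_pos k
  simp [Ne.symm hk] at h0
  omega

lemma dot_single_partner {m : ℕ} (k : Fin (m+1)) (hk : k ≠ 0) :
    (∑ j, (Pi.single k 2 : Fin (m+1) → ℕ) j * partner m k j) = 0 := by
  apply Finset.sum_eq_zero
  intro j _
  rw [Pi.single_apply]
  by_cases hj : j = k
  · subst hj
    have hkp := kval_pos hk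
    suffices h : partner m j = 0 ∨ partner m j j = 0 by
      rcases h with h | h
      · rw [h]; ring_nf; simp [Pi.zero_apply]
      · rw [h]; simp
    right
    unfold partner
    split_ifs with h
    · have h1 : j ≠ (0 : Fin (m+1)) := hk
      have h2 : j ≠ (⟨j.val+1, by omega⟩ : Fin (m+1)) := by
        intro hc
        have := congrArg Fin.val hc
        simp at this
      simp [Pi.single_apply, h1, h2]
    · simp [Pi.single_apply, hk]
  · simp [hj]

lemma single_add_single {n : ℕ} (k : Fin n) :
    (Pi.single k 1 + Pi.single k 1 : Fin n → ℕ) = Pi.single k 2 := by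
  funext j
  by_cases hj : j = k
  · subst hj; simp
  · simp [Pi.single_apply, hj]

lemma fiber_two {m : ℕ} (k : Fin (m+1)) (hk : k ≠ 0) (w : Fin (m+1) → ℕ)
    (hw : phi (AA m) w = 2 * AA m k) :
    w = Pi.single k 2 ∨ w = partner m k := by
  have hkp := kval_pos hk
  obtain ⟨t, ht⟩ : ∃ t, k.val = t + 1 := ⟨k.val - 1, by omega⟩
  have hX : 0 < (2:ℕ)^m := by positivity
  have hAk : AA m k = 2^m + 2^t := by show 2^m + eps k.val = _; rw [ht]; rfl
  have htm : t + 1 ≤ m := by have := k.isLt; omega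
  have hpow : 2^t * 2 ≤ 2^m := by
    have h := Nat.pow_le_pow_right (show 1 ≤ 2 by norm_num) htm
    rw [pow_succ] at h; exact h
  have hs1 : (∑ j, w j) * 2^m ≤ 2 * AA m k := hw ▸ phi_ge w
  have hub : 2 * AA m k ≤ 3 * 2^m := by rw [hAk]; omega
  have hL3 : (∑ j, w j) ≤ 3 := Nat.le_of_mul_le_mul_right (hs1.trans hub) hX
  have hs2 : 2 * (2 * AA m k) ≤ 3 * ((∑ j, w j) * 2^m) := hw ▸ phi_le w
  have hlb : 4 * 2^m ≤ 2 * (2 * AA m k) := by rw [hAk]; omega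
  have hL2 : 2 ≤ ∑ j, w j := by
    by_contra hc
    push_neg at hc
    have h1 : (∑ j, w j) * 2^m ≤ 1 * 2^m := Nat.mul_le_mul_right _ (by omega)
    omega
  rcases (by omega : (∑ j, w j) = 2 ∨ (∑ j, w j) = 3) with hL | hL
  · -- length 2
    obtain ⟨a, b, hab⟩ := sum_eq_two w hL
    have hphi : AA m a + AA m b = 2 * AA m k := by
      rw [hab, phi_add, phi_single, phi_single, one_mul, one_mul] at hw
      exact hw
    have heps : eps a.val + eps b.val = 2^t * 2 := by
      have ha' : AA m a = 2^m + eps a.val := rfl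
      have hb' : AA m b = 2^m + eps b.val := rfl
      rw [ha', hb', hAk] at hphi
      omega
    rcases Nat.eq_zero_or_pos a.val with ha0 | hap
    · -- a = 0
      have ha' : eps a.val = 0 := by rw [ha0]; rfl
      rcases Nat.eq_zero_or_pos b.val with hb0 | hbp
      · exfalso
        have hb' : eps b.val = 0 := by rw [hb0]; rfl
        have : 0 < (2:ℕ)^t := by positivity
        omega
      · obtain ⟨q, hq⟩ : ∃ q, b.val = q + 1 := ⟨b.val - 1, by omega⟩
        have hb' : eps b.val = 2^q := by rw [hq]; rfl
        have hqt : q = t + 1 := by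
          apply two_pow_inj
          rw [pow_succ]
          omega
        have hbval : b.val = k.val + 1 := by omega
        have hklt : k.val < m := by have := b.isLt; omega
        right
        rw [hab]
        unfold partner
        rw [dif_pos hklt]
        have ha0' : a = 0 := Fin.ext ha0
        have hb0' : b = (⟨k.val+1, by omega⟩ : Fin (m+1)) := Fin.ext hbval
        rw [ha0', hb0']
    · obtain ⟨p, hp⟩ : ∃ p, a.val = p + 1 := ⟨a.val - 1, by omega⟩
      have ha' : eps a.val = 2^p := by rw [hp]; rfl
      rcases Nat.eq_zero_or_pos b.val with hb0 | hbp
      · -- b = 0, symmetric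
        have hb' : eps b.val = 0 := by rw [hb0]; rfl
        have hpt : p = t + 1 := by
          apply two_pow_inj
          rw [pow_succ]
          omega
        have haval : a.val = k.val + 1 := by omega
        have hklt : k.val < m := by have := a.isLt; omega
        right
        rw [hab]
        unfold partner
        rw [dif_pos hklt]
        have hb0' : b = 0 := Fin.ext hb0
        have ha0' : a = (⟨k.val+1, by omega⟩ : Fin (m+1)) := Fin.ext haval
        rw [hb0', ha0']
        exact add_comm _ _
      · obtain ⟨q, hq⟩ : ∃ q, b.val = q + 1 := ⟨b.val - 1, by omega⟩
        have hb' : eps b.val = 2^q := by rw [hq]; rfl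
        have hsum : 2^p + 2^q = 2^(t+1) := by rw [pow_succ]; omega
        obtain ⟨hpq, hpt⟩ := two_pow_add hsum
        have hak : a = k := Fin.ext (by omega)
        have hbk : b = k := Fin.ext (by omega)
        left
        rw [hab, hak, hbk, single_add_single]
  · -- length 3
    have hphi := phi_AA w
    rw [hw, hL, hAk] at hphi
    have hE0 : (∑ j, w j * eps j.val) = 0 ∧ 2^t * 2 = 2^m := by
      constructor <;> omega
    have hkm : k.val = m := by
      have : t + 1 = m := by
        apply two_pow_inj
        rw [pow_succ]
        exact hE0.2
      omega
    have hzero : ∀ j : Fin (m+1), j ≠ 0 → w j = 0 := by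
      intro j hj
      have hjp := kval_pos hj
      obtain ⟨p, hp⟩ : ∃ p, j.val = p + 1 := ⟨j.val - 1, by omega⟩
      have := (Finset.sum_eq_zero_iff).1 hE0.1 j (Finset.mem_univ j)
      have hep : eps j.val = 2^p := by rw [hp]; rfl
      have hpp : 0 < (2:ℕ)^p := by positivity
      rw [hep] at this
      rcases Nat.mul_eq_zero.1 this with h | h
      · exact h
      · omega
    have hw0 : w 0 = 3 := by
      have hsum : (∑ j, w j) = w 0 + ∑ j : Fin m, w j.succ := Fin.sum_univ_succ w
      have hz : ∀ j : Fin m, w j.succ = 0 := fun j => hzero j.succ (Fin.succ_ne_zero j)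
      rw [Finset.sum_eq_zero (fun j _ => hz j)] at hsum
      omega
    right
    have hpn : partner m k = Pi.single 0 3 := by
      unfold partner; rw [dif_neg (by omega)]
    rw [hpn]
    funext j
    by_cases hj : j = 0
    · subst hj; simp [hw0]
    · simp [Pi.single_apply, hj, hzero j hj]

def Pm {m : ℕ} (u : Fin (m+1) → ℕ) : ℕ := ∑ k ∈ Finset.univ.erase 0, u k

lemma Pm_add {m : ℕ} (u v : Fin (m+1) → ℕ) : Pm (u + v) = Pm u + Pm v :=
  Finset.sum_add_distrib

lemma Pm_single {m : ℕ} (j : Fin (m+1)) (c : ℕ) :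
    Pm (Pi.single j c) = if j = 0 then 0 else c := by
  unfold Pm
  rw [Finset.sum_pi_single']
  by_cases hj : j = 0
  · simp [hj]
  · simp [Finset.mem_erase, hj]

lemma reduce {m : ℕ} (s : ℕ) (hs : ∀ k : Fin (m+1), k ≠ 0 → s ≠ 2 * AA m k) :
    ∀ n (u : Fin (m+1) → ℕ), Pm u = n → phi (AA m) u = s →
    ∃ c, (∀ k, k ≠ 0 → c k ≤ 1) ∧ phi (AA m) c = s ∧ Rrel (AA m) s u c := by
  intro n
  induction n using Nat.strong_induction_on with
  | _ n ih =>
  intro u hn hu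
  by_cases hred : ∀ k : Fin (m+1), k ≠ 0 → u k ≤ 1
  · exact ⟨u, hred, hu, Relation.ReflTransGen.refl⟩
  push_neg at hred
  obtain ⟨k, hk0, hk2'⟩ := hred
  have hk2 : 2 ≤ u k := by omega
  have hkp := kval_pos hk0
  have hne : u ≠ Pi.single k 2 := by
    intro hc
    exact hs k hk0 (by rw [← hu, hc, phi_single])
  set w := Function.update u k (u k - 2) with hwdef
  have huw : u = w + Pi.single k 2 := by
    funext j
    by_cases hj : j = k
    · subst hj
      simp [hwdef, Function.update_apply, Pi.single_apply]
      omega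
    · simp [hwdef, Function.update_apply, Pi.single_apply, hj]
  have hphiu : phi (AA m) u = phi (AA m) w + 2 * AA m k := by
    conv_lhs => rw [huw]
    rw [phi_add, phi_single]
  have hPmu : Pm u = Pm w + 2 := by
    conv_lhs => rw [huw]
    rw [Pm_add, Pm_single, if_neg hk0]
  by_cases hkm : k.val < m
  · set k' : Fin (m+1) := ⟨k.val+1, by omega⟩ with hk'def
    have hk'0 : k' ≠ 0 := by
      intro hc
      have := congrArg Fin.val hc
      simp [hk'def] at this
    have hk'k : k' ≠ k := by
      intro hc
      have := congrArg Fin.val hc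
      simp [hk'def] at this
    set u' := w + (Pi.single 0 1 + Pi.single k' 1) with hu'def
    obtain ⟨t, ht⟩ : ∃ t, k.val = t + 1 := ⟨k.val - 1, by omega⟩
    have hrel : AA m 0 + AA m k' = 2 * AA m k := by
      show (2^m + eps (0:Fin (m+1)).val) + (2^m + eps k'.val) = 2 * (2^m + eps k.val)
      have h1 : eps (0:Fin (m+1)).val = 0 := rfl
      have h2 : eps k'.val = 2^(t+1) := by
        show eps (k.val + 1) = _
        rw [ht]; rfl
      have h3 : eps k.val = 2^t := by rw [ht]; rfl
      rw [h1, h2, h3, pow_succ]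
      ring
    have hphiu' : phi (AA m) u' = phi (AA m) w + 2 * AA m k := by
      rw [hu'def, phi_add, phi_add, phi_single, phi_single, one_mul, one_mul, ← hrel]
    have hu's : phi (AA m) u' = s := by rw [hphiu', ← hphiu, hu]
    have hu'val : ∀ j, u' j = (if j = k then u k - 2 else u j)
        + ((if j = 0 then 1 else 0) + (if j = k' then 1 else 0)) := by
      intro j
      simp [hu'def, hwdef, Function.update_apply, Pi.single_apply]
    have hpair : ∃ j, u j ≠ 0 ∧ u' j ≠ 0 := by
      by_cases hexj : ∃ j, j ≠ k ∧ u j ≠ 0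
      · obtain ⟨j, hjk, hj0⟩ := hexj
        refine ⟨j, hj0, ?_⟩
        rw [hu'val j, if_neg hjk]
        omega
      · push_neg at hexj
        have hk3 : 3 ≤ u k := by
          rcases Nat.lt_or_ge (u k) 3 with h | h
          · exfalso
            apply hne
            funext j
            by_cases hj : j = k
            · subst hj; simp [Pi.single_apply]; omega
            · simp [Pi.single_apply, hj, hexj j hj]
          · exact h
        refine ⟨k, by omega, ?_⟩
        rw [hu'val k, if_pos rfl, if_neg hk0, if_neg (Ne.symm hk'k)]
        omega
    have hstep : step (AA m) s u u' := by
      refine ⟨hu, hu's, ?_⟩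
      intro hdot
      obtain ⟨j, hj1, hj2⟩ := hpair
      have := Finset.sum_eq_zero_iff.1 hdot j (Finset.mem_univ j)
      rcases Nat.mul_eq_zero.1 this with h | h
      · exact hj1 h
      · exact hj2 h
    have hPmu' : Pm u' = Pm w + 1 := by
      rw [hu'def, Pm_add, Pm_add, Pm_single, Pm_single, if_pos rfl, if_neg hk'0]
    obtain ⟨c, hc1, hc2, hc3⟩ := ih (Pm u') (by omega) u' rfl hu's
    exact ⟨c, hc1, hc2, Relation.ReflTransGen.head hstep hc3⟩
  · -- k.val = m
    have hkm' : k.val = m := by have := k.isLt; omega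
    obtain ⟨t, htm⟩ : ∃ t, m = t + 1 := ⟨m - 1, by omega⟩
    set u' := w + Pi.single 0 3 with hu'def
    have hrel : 3 * AA m 0 = 2 * AA m k := by
      show 3 * (2^m + eps (0:Fin (m+1)).val) = 2 * (2^m + eps k.val)
      have h1 : eps (0:Fin (m+1)).val = 0 := rfl
      have h3 : eps k.val = 2^t := by rw [hkm', htm]; rfl
      rw [h1, h3, htm, pow_succ]
      ring
    have hphiu' : phi (AA m) u' = phi (AA m) w + 2 * AA m k := by
      rw [hu'def, phi_add, phi_single, ← hrel]
    have hu's : phi (AA m) u' = s := by rw [hphiu', ← hphiu, hu]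
    have hu'val : ∀ j, u' j = (if j = k then u k - 2 else u j)
        + (if j = 0 then 3 else 0) := by
      intro j
      simp [hu'def, hwdef, Function.update_apply, Pi.single_apply]
    have hpair : ∃ j, u j ≠ 0 ∧ u' j ≠ 0 := by
      by_cases hexj : ∃ j, j ≠ k ∧ u j ≠ 0
      · obtain ⟨j, hjk, hj0⟩ := hexj
        refine ⟨j, hj0, ?_⟩
        rw [hu'val j, if_neg hjk]
        omega
      · push_neg at hexj
        have hk3 : 3 ≤ u k := by
          rcases Nat.lt_or_ge (u k) 3 with h | h
          · exfalso
            apply hne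
            funext j
            by_cases hj : j = k
            · subst hj; simp [Pi.single_apply]; omega
            · simp [Pi.single_apply, hj, hexj j hj]
          · exact h
        refine ⟨k, by omega, ?_⟩
        rw [hu'val k, if_pos rfl, if_neg hk0]
        omega
    have hstep : step (AA m) s u u' := by
      refine ⟨hu, hu's, ?_⟩
      intro hdot
      obtain ⟨j, hj1, hj2⟩ := hpair
      have := Finset.sum_eq_zero_iff.1 hdot j (Finset.mem_univ j)
      rcases Nat.mul_eq_zero.1 this with h | h
      · exact hj1 h
      · exact hj2 h
    have hPmu' : Pm u' = Pm w := by
      rw [hu'def, Pm_add, Pm_single, if_pos rfl]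
      omega
    obtain ⟨c, hc1, hc2, hc3⟩ := ih (Pm u') (by omega) u' rfl hu's
    exact ⟨c, hc1, hc2, Relation.ReflTransGen.head hstep hc3⟩

lemma step_symm_s19 {m : ℕ} (s : ℕ) : Symmetric (step (AA m) s) := by
  rintro x y ⟨h1, h2, h3⟩
  refine ⟨h2, h1, fun hc => h3 ?_⟩
  rw [show (∑ i, x i * y i) = ∑ i, y i * x i from
    Finset.sum_congr rfl fun i _ => mul_comm _ _]
  exact hc

lemma not_betti {m : ℕ} (s : ℕ) (hs : ∀ k : Fin (m+1), k ≠ 0 → s ≠ 2 * AA m k) :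
    ¬ IsBetti (AA m) s := by
  rintro ⟨u, v, hu, hv, hR⟩
  obtain ⟨c, hc1, hc2, hc3⟩ := reduce s hs (Pm u) u rfl hu
  obtain ⟨c', hc1', hc2', hc3'⟩ := reduce s hs (Pm v) v rfl hv
  have hcc : c = c' := red_unique c c' hc1 hc1' (hc2.trans hc2'.symm)
  subst hcc
  exact hR (hc3.trans ((@Relation.ReflTransGen.stdSymm _ (step (AA m) s) ⟨fun a b h => step_symm_s19 s h⟩).symm _ _ hc3'))

lemma single_phi {m : ℕ} (k : Fin (m+1)) :
    phi (AA m) (Pi.single k 2) = 2 * AA m k := phi_single _ k 2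

lemma betti_two {m : ℕ} (k : Fin (m+1)) (hk : k ≠ 0) : IsBetti (AA m) (2 * AA m k) := by
  refine ⟨Pi.single k 2, partner m k, single_phi k, partner_phi k hk, ?_⟩
  intro hR
  have key : ∀ x, Relation.ReflTransGen (step (AA m) (2 * AA m k)) (Pi.single k 2) x →
      x = Pi.single k 2 := by
    intro x hx
    induction hx with
    | refl => rfl
    | tail hab hbc ih =>
      rcases hbc with ⟨hb1, hb2, hb3⟩
      rcases fiber_two k hk _ hb2 with h | h
      · exact h
      · exfalso
        rw [ih] at hb3
        rw [h] at hb3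
        exact hb3 (dot_single_partner k hk)
  exact single_ne_partner k hk (key _ hR).symm

lemma fiber_set {m : ℕ} (k : Fin (m+1)) (hk : k ≠ 0) :
    {w : Fin (m+1) → ℕ | phi (AA m) w = 2 * AA m k}
      = {Pi.single k 2, partner m k} := by
  ext w
  simp only [Set.mem_setOf_eq, Set.mem_insert_iff, Set.mem_singleton_iff]
  constructor
  · exact fiber_two k hk w
  · rintro (rfl | rfl)
    · exact single_phi k
    · exact partner_phi k hk

lemma betti_set {m : ℕ} :
    {s : ℕ | IsBetti (AA m) s} = (fun k => 2 * AA m k) '' {k : Fin (m+1) | k ≠ 0} := by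
  ext s
  simp only [Set.mem_setOf_eq, Set.mem_image]
  constructor
  · intro h
    by_contra hc
    push_neg at hc
    exact not_betti s (fun k hk0 heq => hc k hk0 heq.symm) h
  · rintro ⟨k, hk, rfl⟩
    exact betti_two k hk

lemma uniquely_pres {m : ℕ} : UniquelyPresented (AA m) := by
  intro a ha
  have hex : ∃ k : Fin (m+1), k ≠ 0 ∧ a = 2 * AA m k := by
    by_contra hc
    push_neg at hc
    exact not_betti a hc ha
  obtain ⟨k, hk, rfl⟩ := hex
  exact ⟨Pi.single k 2, partner m k, single_ne_partner k hk, fiber_set k hk,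
    dot_single_partner k hk⟩
lemma gens_eq : ∀ (i : ℕ) (k : Fin (i+2)), gens i k = 2^(i+1) + eps k.val := by
  intro i
  induction i with
  | zero => intro k; fin_cases k <;> simp [gens, eps]
  | succ i ih =>
    intro k
    refine Fin.cases ?_ (fun j => ?_) k
    · show 2 * gens i 0 = _
      rw [ih 0]; simp [eps]; ring
    · refine Fin.cases ?_ (fun j2 => ?_) j
      · show gens i 0 + gens i 1 = _
        rw [ih 0, ih 1]; simp [eps]; ring
      · show 2 * gens i j2.succ = _
        rw [ih j2.succ]; simp [eps, pow_succ]; ring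

lemma gens_AA (i : ℕ) : gens (i+1) = AA (i+2) := by
  funext k
  rw [gens_eq (i+1) k]
  rfl

/-- For every `i ≥ 1`, `S_{i+1}` is the gluing of `2 S_i` and `⟨a₁ + a₂⟩` along
`d = 2a₁ + 2a₂`, its Betti elements are `{2a₁+2a₂, 2(2a₂), …, 2(2a_{i+1})}` (i.e. the doubles
of all its minimal generators other than the first), and `S_{i+1}` is uniquely presented. -/
theorem stmt19 (i : ℕ) :
    -- d belongs to both pieces and is nonzero
    (2 * gens i 0 + 2 * gens i 1
        ∈ AddSubmonoid.closure (Set.range (fun k => 2 * gens i k))) ∧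
    (2 * gens i 0 + 2 * gens i 1
        ∈ AddSubmonoid.closure ({gens i 0 + gens i 1} : Set ℕ)) ∧
    (2 * gens i 0 + 2 * gens i 1 ≠ 0) ∧
    -- gluing condition on the generated groups (inside ℤ)
    (AddSubgroup.closure (Set.range (fun k => ((2 * gens i k : ℕ) : ℤ))) ⊓
        AddSubgroup.zmultiples ((gens i 0 + gens i 1 : ℕ) : ℤ)
      = AddSubgroup.zmultiples ((2 * gens i 0 + 2 * gens i 1 : ℕ) : ℤ)) ∧
    -- the Betti elements of S_{i+2} = ⟨gens (i+1)⟩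
    ({s : ℕ | IsBetti (gens (i + 1)) s}
      = (fun k => 2 * gens (i + 1) k) '' {k : Fin (i + 3) | k ≠ 0}) ∧
    -- S_{i+2} is uniquely presented
    UniquelyPresented (gens (i + 1)) := by
  refine ⟨?_, ?_, ?_, ?_, ?_, ?_⟩
  · exact add_mem (AddSubmonoid.subset_closure ⟨0, rfl⟩) (AddSubmonoid.subset_closure ⟨1, rfl⟩)
  · have h : 2 * gens i 0 + 2 * gens i 1 = (gens i 0 + gens i 1) + (gens i 0 + gens i 1) := by ring
    rw [h]
    exact add_mem (AddSubmonoid.subset_closure rfl) (AddSubmonoid.subset_closure rfl)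
  · have h0 := gens_eq i 0
    have hp : 0 < 2^(i+1) := pow_pos (by norm_num) _
    have h0' : eps (0 : Fin (i+2)).val = 0 := rfl
    omega
  · have hcl : AddSubgroup.closure (Set.range (fun k => ((2 * gens i k : ℕ) : ℤ)))
        = AddSubgroup.zmultiples (2 : ℤ) := by
      apply le_antisymm
      · rw [AddSubgroup.closure_le]
        rintro x ⟨k, rfl⟩
        exact Int.mem_zmultiples_iff.2 ⟨(gens i k : ℤ), by push_cast; ring⟩
      · rw [AddSubgroup.zmultiples_le]
        have h2 : (2:ℤ) = ((2 * gens i 1 : ℕ) : ℤ) - ((2 * gens i 0 : ℕ) : ℤ) := by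
          rw [gens_eq i 0, gens_eq i 1]; simp [eps]; ring
        rw [h2]
        exact sub_mem (AddSubgroup.subset_closure ⟨1, rfl⟩) (AddSubgroup.subset_closure ⟨0, rfl⟩)
    rw [hcl]
    ext x
    simp only [AddSubgroup.mem_inf, Int.mem_zmultiples_iff]
    have hb : ((2 * gens i 0 + 2 * gens i 1 : ℕ) : ℤ) = 2 * ((gens i 0 + gens i 1 : ℕ) : ℤ) := by
      push_cast; ring
    rw [hb]
    constructor
    · rintro ⟨h2, hn⟩
      refine IsCoprime.mul_dvd ?_ h2 hn
      rw [Int.isCoprime_iff_gcd_eq_one]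
      have hodd : Odd (gens i 0 + gens i 1) := by
        rw [gens_eq i 0, gens_eq i 1, Nat.odd_iff]
        have h0' : eps (0 : Fin (i+2)).val = 0 := rfl
        have h1' : eps (1 : Fin (i+2)).val = 1 := rfl
        have he : 2^(i+1) = 2*2^i := by ring
        omega
      simp only [Int.gcd, Int.natAbs_natCast, Int.natAbs_cast]
      exact Nat.coprime_two_left.2 hodd
    · intro h
      exact ⟨dvd_trans ⟨_, rfl⟩ h, dvd_trans ⟨2, by ring⟩ h⟩
  · rw [gens_AA]
    exact betti_set
  · rw [gens_AA]
    exact uniquely_pres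
end
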